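/- arXiv:1310.0703 — 3 statements merged into one kernel-verified Lean document; each statement's English description precedes it below -/
import Mathlib

section
/- Let X be a nonempty set, f : X → X a bijection, δ > 0, and F : X × 𝔻 → 𝔻 such that for each x ∈ X the map w ↦ F(x,w) is holomorphic on the open unit disk 𝔻 with |F(x,w)| ≤ e^{−δ} for all w ∈ 𝔻. Let m : X → 𝔻 satisfy m(f(x)) = F(x, m(x)) for all x ∈ X. Then every bounded function u : X → ℂ satisfies sup_{x∈X} |u(x)| ≤ (1 − e^{−δ})^{-1} · sup_{y∈X} |u(f(y)) − (∂_w F)(y, m(y))·u(y)|, where ∂_w F denotes the complex derivative in the disk variable. -/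
open MeasureTheory Filter Topology

open Metric Complex in
private lemma mobius_den_ne {a t : ℂ} (ha : ‖a‖ < 1) (ht : ‖t‖ < 1) :
    (1 : ℂ) - (starRingEnd ℂ a) * t ≠ 0 := by
  intro h
  have h1 : ‖(starRingEnd ℂ a) * t‖ < 1 := by
    rw [norm_mul, RCLike.norm_conj]
    nlinarith [norm_nonneg a, norm_nonneg t]
  have h2 : (starRingEnd ℂ a) * t = 1 := by linear_combination -h
  rw [h2] at h1
  simp at h1

open Metric Complex in
private lemma normSq_key (a t : ℂ) :
    ‖(1 : ℂ) - (starRingEnd ℂ a) * t‖ ^ 2 - ‖a - t‖ ^ 2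
      = (1 - ‖a‖ ^ 2) * (1 - ‖t‖ ^ 2) := by
  have h : ((1 - (starRingEnd ℂ a) * t) * (starRingEnd ℂ) (1 - (starRingEnd ℂ a) * t)
        - (a - t) * (starRingEnd ℂ) (a - t) : ℂ)
      = (1 - a * (starRingEnd ℂ) a) * (1 - t * (starRingEnd ℂ) t) := by
    simp only [map_sub, map_mul, map_one, Complex.conj_conj]
    ring
  rw [Complex.mul_conj, Complex.mul_conj, Complex.mul_conj, Complex.mul_conj] at h
  have h2 : (Complex.normSq (1 - (starRingEnd ℂ a) * t) : ℝ) - Complex.normSq (a - t)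
      = (1 - Complex.normSq a) * (1 - Complex.normSq t) := by exact_mod_cast h
  simpa only [Complex.normSq_eq_norm_sq] using h2

open Metric Complex in
private lemma mobius_lt_one {a t : ℂ} (ha : ‖a‖ < 1) (ht : ‖t‖ < 1) :
    ‖(a - t) / (1 - (starRingEnd ℂ a) * t)‖ < 1 := by
  have hden := mobius_den_ne ha ht
  rw [norm_div, div_lt_one (norm_pos_iff.mpr hden)]
  have h := normSq_key a t
  have hpos : 0 < (1 - ‖a‖ ^ 2) * (1 - ‖t‖ ^ 2) :=
    mul_pos (by nlinarith [norm_nonneg a]) (by nlinarith [norm_nonneg t])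
  exact lt_of_pow_lt_pow_left₀ 2 (norm_nonneg _) (by nlinarith)

open Metric Complex in
private lemma mobius_hasDerivAt {a : ℂ} (t : ℂ) (h : (1 : ℂ) - (starRingEnd ℂ a) * t ≠ 0) :
    HasDerivAt (fun s => (a - s) / (1 - (starRingEnd ℂ a) * s))
      (((starRingEnd ℂ a) * a - 1) / (1 - (starRingEnd ℂ a) * t) ^ 2) t := by
  have h1 : HasDerivAt (fun s : ℂ => a - s) (-1) t := (hasDerivAt_id t).const_sub a
  have h2 : HasDerivAt (fun s : ℂ => 1 - (starRingEnd ℂ a) * s) (-(starRingEnd ℂ a)) t := by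
    simpa using ((hasDerivAt_id t).const_mul (starRingEnd ℂ a)).const_sub 1
  have := h1.div h2 h
  refine this.congr_deriv ?_
  ring

open Metric Complex in
private lemma schwarz_pick {g : ℂ → ℂ} {ρ : ℝ} (hρ : 0 < ρ)
    (hg : DifferentiableOn ℂ g (Metric.ball 0 1))
    (hbd : ∀ t ∈ Metric.ball (0:ℂ) 1, ‖g t‖ < ρ)
    {w : ℂ} (hw : ‖w‖ < 1) :
    ‖deriv g w‖ * (1 - ‖w‖ ^ 2) * ρ ≤ ρ ^ 2 - ‖g w‖ ^ 2 := by
  have hwb : w ∈ Metric.ball (0:ℂ) 1 := by rwa [mem_ball_zero_iff]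
  set z : ℂ := g w / ρ with hz
  have hz1 : ‖z‖ < 1 := by
    rw [hz, norm_div, Complex.norm_real, Real.norm_of_nonneg hρ.le, div_lt_one hρ]
    exact hbd w hwb
  set mw : ℂ → ℂ := fun s => (w - s) / (1 - (starRingEnd ℂ w) * s) with hmw
  set mz : ℂ → ℂ := fun s => (z - s) / (1 - (starRingEnd ℂ z) * s) with hmz
  set H : ℂ → ℂ := fun t => mz (g (mw t) / ρ) with hH
  -- pointwise facts for t in the ball
  have hstep : ∀ t ∈ Metric.ball (0:ℂ) 1, ‖mw t‖ < 1 := fun t ht =>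
    mobius_lt_one hw (mem_ball_zero_iff.mp ht)
  have hgd : ∀ t ∈ Metric.ball (0:ℂ) 1, ‖g (mw t) / ρ‖ < 1 := by
    intro t ht
    rw [norm_div, Complex.norm_real, Real.norm_of_nonneg hρ.le, div_lt_one hρ]
    exact hbd _ (mem_ball_zero_iff.mpr (hstep t ht))
  have hHd : ∀ t ∈ Metric.ball (0:ℂ) 1,
      HasDerivAt H ((((starRingEnd ℂ z) * z - 1) / (1 - (starRingEnd ℂ z) * (g (mw t) / ρ)) ^ 2)
        * ((deriv g (mw t)) / ρ * (((starRingEnd ℂ w) * w - 1) / (1 - (starRingEnd ℂ w) * t) ^ 2))) t := by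
    intro t ht
    have h1 : HasDerivAt mw (((starRingEnd ℂ w) * w - 1) / (1 - (starRingEnd ℂ w) * t) ^ 2) t :=
      mobius_hasDerivAt t (mobius_den_ne hw (mem_ball_zero_iff.mp ht))
    have hmwt : mw t ∈ Metric.ball (0:ℂ) 1 := mem_ball_zero_iff.mpr (hstep t ht)
    have h2 : HasDerivAt g (deriv g (mw t)) (mw t) :=
      ((hg.differentiableAt (isOpen_ball.mem_nhds hmwt)).hasDerivAt)
    have h3 : HasDerivAt (fun s => g s / ρ) (deriv g (mw t) / ρ) (mw t) := h2.div_const _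
    have h4 : HasDerivAt mz (((starRingEnd ℂ z) * z - 1) / (1 - (starRingEnd ℂ z) * (g (mw t) / ρ)) ^ 2)
        (g (mw t) / ρ) :=
      mobius_hasDerivAt _ (mobius_den_ne hz1 (hgd t ht))
    exact h4.comp t (h3.comp t h1)
  have hH0 : H 0 = 0 := by
    have hmw0 : mw 0 = w := by simp [hmw]
    simp only [hH, hmw0, ← hz]
    simp [hmz, mobius_den_ne hz1 hz1]
  have hmaps : Set.MapsTo H (Metric.ball (0:ℂ) 1) (Metric.ball (H 0) 1) := by
    intro t ht
    rw [hH0, mem_ball_zero_iff]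
    exact mobius_lt_one hz1 (hgd t ht)
  have hdiff : DifferentiableOn ℂ H (Metric.ball (0:ℂ) 1) := fun t ht =>
    ((hHd t ht).differentiableAt).differentiableWithinAt
  have hder := Complex.norm_deriv_le_div_of_mapsTo_ball hdiff (hmaps.mono_right Metric.ball_subset_closedBall) one_pos
  have h0b : (0:ℂ) ∈ Metric.ball (0:ℂ) 1 := by simp
  have hder0 : deriv H 0 = (((starRingEnd ℂ z) * z - 1) / (1 - (starRingEnd ℂ z) * (g (mw 0) / ρ)) ^ 2)
      * ((deriv g (mw 0)) / ρ * (((starRingEnd ℂ w) * w - 1) / (1 - (starRingEnd ℂ w) * 0) ^ 2)) :=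
    (hHd 0 h0b).deriv
  have hmw0 : mw 0 = w := by simp [hmw]
  rw [hmw0, ← hz] at hder0
  -- compute the norm of deriv H 0
  have hcw : (starRingEnd ℂ w) * w = (Complex.normSq w : ℂ) := by
    rw [mul_comm]; exact Complex.mul_conj w
  have hcz : (starRingEnd ℂ z) * z = (Complex.normSq z : ℂ) := by
    rw [mul_comm]; exact Complex.mul_conj z
  have hnw : ‖(starRingEnd ℂ w) * w - 1‖ = 1 - ‖w‖ ^ 2 := by
    rw [hcw]
    rw [show ((Complex.normSq w : ℂ) - 1) = ((Complex.normSq w - 1 : ℝ) : ℂ) by push_cast; ring]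
    rw [Complex.norm_real, Real.norm_eq_abs, abs_of_nonpos (by
      simp only [Complex.normSq_eq_norm_sq]; nlinarith [norm_nonneg w])]
    simp only [Complex.normSq_eq_norm_sq]; ring
  have hzz : (1 : ℂ) - (starRingEnd ℂ z) * z = ((1 - ‖z‖ ^ 2 : ℝ) : ℂ) := by
    rw [hcz]; push_cast [Complex.normSq_eq_norm_sq]; ring
  have h1z : (0:ℝ) < 1 - ‖z‖ ^ 2 := by nlinarith [norm_nonneg z]
  have hnz1 : ‖(starRingEnd ℂ) z * z - 1‖ = 1 - ‖z‖ ^ 2 := by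
    rw [hcz]
    rw [show ((Complex.normSq z : ℂ) - 1) = ((Complex.normSq z - 1 : ℝ) : ℂ) by push_cast; ring]
    rw [Complex.norm_real, Real.norm_eq_abs, abs_of_nonpos (by
      simp only [Complex.normSq_eq_norm_sq]; nlinarith [norm_nonneg z])]
    simp only [Complex.normSq_eq_norm_sq]; ring
  rw [hder0] at hder
  simp only [mul_zero, sub_zero, one_pow, div_one] at hder
  rw [norm_mul, norm_mul, norm_div, norm_div, norm_pow, hzz, Complex.norm_real,
    Real.norm_of_nonneg h1z.le, hnz1, hnw, Complex.norm_real,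
    Real.norm_of_nonneg hρ.le] at hder
  have hq : (1 - ‖z‖ ^ 2) / (1 - ‖z‖ ^ 2) ^ 2 = (1 - ‖z‖ ^ 2)⁻¹ := by
    rw [show ((1:ℝ) - ‖z‖ ^ 2) ^ 2 = (1 - ‖z‖ ^ 2) * (1 - ‖z‖ ^ 2) by ring,
      div_mul_eq_div_div, div_self (ne_of_gt h1z), one_div]
  rw [hq] at hder
  have hzval : ‖z‖ ^ 2 = ‖g w‖ ^ 2 / ρ ^ 2 := by
    rw [hz, norm_div, Complex.norm_real, Real.norm_of_nonneg hρ.le, div_pow]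
  have key : ‖deriv g w‖ / ρ * (1 - ‖w‖ ^ 2) ≤ 1 - ‖z‖ ^ 2 := by
    have h2 := mul_le_mul_of_nonneg_left hder h1z.le
    rw [← mul_assoc, mul_inv_cancel₀ (ne_of_gt h1z), one_mul] at h2
    linarith [h2]
  rw [hzval] at key
  have h2 : ‖deriv g w‖ * (1 - ‖w‖ ^ 2) ≤ ρ * (1 - ‖g w‖ ^ 2 / ρ ^ 2) := by
    rw [div_mul_eq_mul_div, div_le_iff₀ hρ] at key
    linarith [key]
  have h3 : ρ * (1 - ‖g w‖ ^ 2 / ρ ^ 2) * ρ = ρ ^ 2 - ‖g w‖ ^ 2 := by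
    field_simp
  nlinarith [h2, hρ]

/-- hyperbolicity estimate for invariant sections.  Let `f : X → X` be a
bijection, and `F : X × 𝔻 → 𝔻` holomorphic in the disk variable with `|F(x,w)| ≤ e^{−δ}`.
If `m : X → 𝔻` satisfies `m(f(x)) = F(x, m(x))`, then every bounded `u : X → ℂ` satisfies
`sup_x |u(x)| ≤ (1 − e^{−δ})⁻¹ · sup_y |u(f(y)) − (∂_w F)(y, m(y))·u(y)|`. -/
theorem stmt10 {X : Type*} [Nonempty X]
    (f : X → X) (hf : Function.Bijective f)
    (δ : ℝ) (hδ : 0 < δ)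
    (F : X → ℂ → ℂ)
    (hhol : ∀ x, DifferentiableOn ℂ (F x) (Metric.ball (0:ℂ) 1))
    (hbound : ∀ x, ∀ w ∈ Metric.ball (0:ℂ) 1, ‖F x w‖ ≤ Real.exp (-δ))
    (m : X → ℂ) (hm : ∀ x, ‖m x‖ < 1)
    (hminv : ∀ x, m (f x) = F x (m x))
    (u : X → ℂ) (hu : ∃ M : ℝ, ∀ x, ‖u x‖ ≤ M)
    (C : ℝ) (hC : ∀ y, ‖u (f y) - deriv (F y) (m y) * u y‖ ≤ C) :
    ∀ x, ‖u x‖ ≤ (1 - Real.exp (-δ))⁻¹ * C := by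
  intro x
  obtain ⟨M, hM⟩ := hu
  set r := Real.exp (-δ) with hrdef
  have hr0 : 0 < r := Real.exp_pos _
  have hr1 : r < 1 := by
    rw [hrdef, Real.exp_lt_one_iff]
    linarith
  have hC0 : 0 ≤ C := le_trans (norm_nonneg _) (hC (Classical.arbitrary X))
  have hM0 : 0 ≤ M := le_trans (norm_nonneg _) (hM (Classical.arbitrary X))
  have hmr : ∀ z, ‖m z‖ ≤ r := by
    intro z
    obtain ⟨w, rfl⟩ := hf.2 z
    rw [hminv w]
    exact hbound w (m w) (Metric.mem_ball.mpr (by simpa using hm w))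
  suffices hkey : ∀ ρ : ℝ, r < ρ → ρ < 1 → ‖u x‖ ≤ (1 - ρ)⁻¹ * C by
    have ht : Tendsto (fun ρ : ℝ => (1 - ρ)⁻¹ * C) (𝓝[>] r) (𝓝 ((1 - r)⁻¹ * C)) := by
      apply Tendsto.mono_left _ nhdsWithin_le_nhds
      exact Tendsto.mul ((tendsto_const_nhds.sub tendsto_id).inv₀ (by linarith)) tendsto_const_nhds
    refine ge_of_tendsto ht ?_
    filter_upwards [Ioo_mem_nhdsGT_of_mem ⟨le_refl r, hr1⟩] with ρ hρ
    exact hkey ρ hρ.1 hρ.2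
  intro ρ hrρ hρ1
  have hρ0 : 0 < ρ := hr0.trans hrρ
  -- backward orbit
  set e := Equiv.ofBijective f hf with he
  set y : ℕ → X := fun n => e.symm^[n] x with hy
  have hy0 : y 0 = x := rfl
  have hyf : ∀ n, f (y (n + 1)) = y n := by
    intro n
    have h1 : y (n + 1) = e.symm (y n) := Function.iterate_succ_apply' _ _ _
    rw [h1]
    exact e.apply_symm_apply (y n)
  set a : ℕ → ℝ := fun n => ‖m (y n)‖ ^ 2 with ha
  set d : ℕ → ℂ := fun n => deriv (F (y (n + 1))) (m (y (n + 1))) with hd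
  set P : ℕ → ℝ := fun n => ∏ j ∈ Finset.range n, ‖d j‖ with hP
  have ha0 : ∀ n, 0 ≤ a n := fun n => sq_nonneg _
  have har : ∀ n, a n ≤ r ^ 2 := fun n => by
    have := hmr (y n); simp only [ha]; nlinarith [norm_nonneg (m (y n))]
  have haρ : ∀ n, a n < ρ := fun n => lt_of_le_of_lt (har n) (by nlinarith)
  have hP0 : ∀ n, 0 ≤ P n := fun n => Finset.prod_nonneg fun j _ => norm_nonneg _
  have hPsucc : ∀ n, P (n + 1) = P n * ‖d n‖ := fun n => Finset.prod_range_succ _ _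
  -- the Schwarz-Pick estimate along the orbit
  have K2 : ∀ n, ‖d n‖ * (1 - a (n + 1)) * ρ ≤ ρ ^ 2 - a n := by
    intro n
    have hsp := schwarz_pick hρ0 (hhol (y (n + 1)))
      (fun t ht => lt_of_le_of_lt (hbound (y (n + 1)) t ht) hrρ) (hm (y (n + 1)))
    have hval : F (y (n + 1)) (m (y (n + 1))) = m (y n) := by
      rw [← hminv (y (n + 1)), hyf n]
    rw [hval] at hsp
    exact hsp
  -- induction A: unrolling
  have hA : ∀ n, ‖u x‖ ≤ C * (∑ k ∈ Finset.range n, P k) + P n * ‖u (y n)‖ := by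
    intro n
    induction n with
    | zero => simp [hP, hy0]
    | succ n ih =>
      have h2 := hC (y (n + 1))
      rw [hyf n] at h2
      have h1 : ‖u (y n)‖ ≤ ‖d n‖ * ‖u (y (n + 1))‖ + C := by
        calc ‖u (y n)‖ = ‖d n * u (y (n + 1)) + (u (y n) - d n * u (y (n + 1)))‖ := by
              congr 1; ring
          _ ≤ ‖d n * u (y (n + 1))‖ + ‖u (y n) - d n * u (y (n + 1))‖ := norm_add_le _ _
          _ ≤ ‖d n‖ * ‖u (y (n + 1))‖ + C := by rw [norm_mul]; gcongr
      calc ‖u x‖ ≤ C * (∑ k ∈ Finset.range n, P k) + P n * ‖u (y n)‖ := ih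
        _ ≤ C * (∑ k ∈ Finset.range n, P k) + P n * (‖d n‖ * ‖u (y (n + 1))‖ + C) := by
            have := hP0 n; nlinarith [h1]
        _ = C * (∑ k ∈ Finset.range (n + 1), P k) + P (n + 1) * ‖u (y (n + 1))‖ := by
            rw [Finset.sum_range_succ, hPsucc n]; ring
  -- induction B: weighted sum bound
  have hB : ∀ n, (∑ k ∈ Finset.range n, P k) * (ρ * (1 - ρ)) + P n * (ρ - a n) ≤ ρ - a 0 := by
    intro n
    induction n with
    | zero => simp [hP]
    | succ n ih =>
      have h3 : ‖d n‖ * (ρ - a (n + 1)) ≤ ρ ^ 2 - a n := by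
        have hstep : ρ - a (n + 1) ≤ ρ * (1 - a (n + 1)) := by nlinarith [ha0 (n + 1)]
        have := K2 n
        nlinarith [norm_nonneg (d n), ha0 (n + 1)]
      calc (∑ k ∈ Finset.range (n + 1), P k) * (ρ * (1 - ρ)) + P (n + 1) * (ρ - a (n + 1))
          = (∑ k ∈ Finset.range n, P k) * (ρ * (1 - ρ))
            + P n * (ρ * (1 - ρ) + ‖d n‖ * (ρ - a (n + 1))) := by
            rw [Finset.sum_range_succ, hPsucc n]; ring
        _ ≤ (∑ k ∈ Finset.range n, P k) * (ρ * (1 - ρ)) + P n * (ρ - a n) := by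
            have := hP0 n; nlinarith [h3]
        _ ≤ ρ - a 0 := ih
  -- induction C: geometric decay of P
  have hCgeo : ∀ n, P n * (1 - a n) ≤ ρ ^ n * (1 - a 0) := by
    intro n
    induction n with
    | zero => simp [hP]
    | succ n ih =>
      have h4 : ‖d n‖ * (1 - a (n + 1)) ≤ ρ * (1 - a n) := by
        have := K2 n
        have h5 : ρ ^ 2 - a n ≤ ρ ^ 2 * (1 - a n) := by
          nlinarith [mul_nonneg (ha0 n) (show (0:ℝ) ≤ 1 - ρ ^ 2 by nlinarith)]
        nlinarith [norm_nonneg (d n)]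
      calc P (n + 1) * (1 - a (n + 1)) = P n * (‖d n‖ * (1 - a (n + 1))) := by
            rw [hPsucc n]; ring
        _ ≤ P n * (ρ * (1 - a n)) := by have := hP0 n; nlinarith [h4]
        _ = ρ * (P n * (1 - a n)) := by ring
        _ ≤ ρ * (ρ ^ n * (1 - a 0)) := by nlinarith [ih]
        _ = ρ ^ (n + 1) * (1 - a 0) := by ring
  have hPb : ∀ n, P n ≤ ρ ^ n / (1 - r ^ 2) := by
    intro n
    have h1 : 1 - a n ≥ 1 - r ^ 2 := by linarith [har n]
    have h2 : (0:ℝ) < 1 - r ^ 2 := by nlinarith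
    have h3 : P n * (1 - r ^ 2) ≤ ρ ^ n := by
      calc P n * (1 - r ^ 2) ≤ P n * (1 - a n) := by have := hP0 n; nlinarith
        _ ≤ ρ ^ n * (1 - a 0) := hCgeo n
        _ ≤ ρ ^ n := by nlinarith [ha0 0, pow_nonneg hρ0.le n]
    rw [le_div_iff₀ h2]
    exact h3
  -- sum bound
  have hsum : ∀ n, (∑ k ∈ Finset.range n, P k) ≤ (1 - ρ)⁻¹ := by
    intro n
    have h1 := hB n
    have h2 : (∑ k ∈ Finset.range n, P k) * (ρ * (1 - ρ)) ≤ ρ := by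
      have hPn : 0 ≤ P n * (ρ - a n) := mul_nonneg (hP0 n) (by linarith [haρ n])
      nlinarith [ha0 0]
    have h3 : (0:ℝ) < ρ * (1 - ρ) := by nlinarith
    rw [show (1 - ρ)⁻¹ = ρ / (ρ * (1 - ρ)) from
      (div_mul_cancel_left₀ (ne_of_gt hρ0) _).symm]
    rw [le_div_iff₀ h3]
    exact h2
  -- finish for fixed ρ
  have hfin : ∀ n : ℕ, ‖u x‖ ≤ (1 - ρ)⁻¹ * C + M / (1 - r ^ 2) * ρ ^ n := by
    intro n
    calc ‖u x‖ ≤ C * (∑ k ∈ Finset.range n, P k) + P n * ‖u (y n)‖ := hA n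
      _ ≤ C * (1 - ρ)⁻¹ + (ρ ^ n / (1 - r ^ 2)) * M := by
          have h2 : (0:ℝ) < 1 - r ^ 2 := by nlinarith
          gcongr
          · exact hsum n
          · exact hPb n
          · exact hM (y n)
      _ = (1 - ρ)⁻¹ * C + M / (1 - r ^ 2) * ρ ^ n := by ring
  have htend : Tendsto (fun n : ℕ => (1 - ρ)⁻¹ * C + M / (1 - r ^ 2) * ρ ^ n) atTop
      (𝓝 ((1 - ρ)⁻¹ * C)) := by
    have h1 : Tendsto (fun n : ℕ => (ρ : ℝ) ^ n) atTop (𝓝 0) :=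
      tendsto_pow_atTop_nhds_zero_of_lt_one hρ0.le hρ1
    have h2 := (h1.const_mul (M / (1 - r ^ 2))).const_add ((1 - ρ)⁻¹ * C)
    simpa using h2
  exact ge_of_tendsto htend (Eventually.of_forall hfin)
end

section
/- Let α ∈ (0,1)∖ℚ, let 1 ≤ r ≤ ∞, and let A ∈ C^r(ℝ/ℤ, SL(2,ℝ)). If for some n ≥ 1 and some x_* ∈ ℝ there is a C^r-renormalization representative (α_n, A^{(n)}) of (f_α, A) at level n around x_* which is C^r-conjugate to a cocycle of rotations — i.e. there exists C ∈ C^r(ℝ/ℤ, SL(2,ℝ)) with C(x+α_n)A^{(n)}(x)C(x)^{-1} ∈ SO(2,ℝ) for all x — then (f_α, A) is C^r-conjugate to a cocycle of rotations: there exists B ∈ C^r(ℝ/ℤ, SL(2,ℝ)) with B(x+α)A(x)B(x)^{-1} ∈ SO(2,ℝ) for all x. -/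
open MeasureTheory Filter Topology
open scoped ENNReal NNReal

noncomputable instance : NormedAddCommGroup (Matrix (Fin 2) (Fin 2) ℝ) := Matrix.normedAddCommGroup
noncomputable instance : NormedSpace ℝ (Matrix (Fin 2) (Fin 2) ℝ) := Matrix.normedSpace
instance : MeasurableSpace (Matrix (Fin 2) (Fin 2) ℝ) := borel _
instance : BorelSpace (Matrix (Fin 2) (Fin 2) ℝ) := ⟨rfl⟩

/-- Rotation matrix by angle `2πθ`. -/
noncomputable def Rot (θ : ℝ) : Matrix (Fin 2) (Fin 2) ℝ :=
  !![Real.cos (2 * Real.pi * θ), -Real.sin (2 * Real.pi * θ);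
     Real.sin (2 * Real.pi * θ),  Real.cos (2 * Real.pi * θ)]

/-- Membership in `SO(2,ℝ)`, i.e. being a rotation matrix. -/
def IsSO2 (M : Matrix (Fin 2) (Fin 2) ℝ) : Prop := ∃ θ : ℝ, M = Rot θ

/-- `1`-periodicity: a function on `ℝ` descends to `ℝ/ℤ`. -/
def Per1 {β : Type*} (A : ℝ → β) : Prop := ∀ x, A (x + 1) = A x

/-- Iterates `A_n(x) = A(x+(n−1)α)⋯A(x)` of a one-frequency cocycle. -/
noncomputable def iter1 (α : ℝ) (A : ℝ → Matrix (Fin 2) (Fin 2) ℝ) :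
    ℕ → ℝ → Matrix (Fin 2) (Fin 2) ℝ
  | 0 => fun _ => 1
  | n + 1 => fun x => A (x + (n : ℝ) * α) * iter1 α A n x

/-- Signed iterates: `A_k` for `k ≥ 0` and `A_{−k}(x) = A_k(x−kα)⁻¹`. -/
noncomputable def iter1Z (α : ℝ) (A : ℝ → Matrix (Fin 2) (Fin 2) ℝ) :
    ℤ → ℝ → Matrix (Fin 2) (Fin 2) ℝ
  | Int.ofNat n => iter1 α A n
  | Int.negSucc n => fun x => (iter1 α A (n + 1) (x - ((n : ℝ) + 1) * α))⁻¹

/-- Lyapunov exponent `L(f_α,A) = lim (1/n) ∫ log‖A_n‖`; by subadditivity (Fekete) the limit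
equals the infimum of the sequence, which we use as the definition. -/
noncomputable def lyap1 (α : ℝ) (A : ℝ → Matrix (Fin 2) (Fin 2) ℝ) : ℝ :=
  ⨅ n : ℕ, ((n : ℝ) + 1)⁻¹ * ∫ x in Set.Icc (0:ℝ) 1, Real.log ‖iter1 α A (n + 1) x‖

/-- `(f_α, A)` is `L²`-conjugate to (a cocycle of) rotations. -/
def L2Conj1 (α : ℝ) (A : ℝ → Matrix (Fin 2) (Fin 2) ℝ) : Prop :=
  ∃ B : ℝ → Matrix (Fin 2) (Fin 2) ℝ, Measurable B ∧ Per1 B ∧ (∀ x, (B x).det = 1) ∧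
    (∫⁻ x in Set.Icc (0:ℝ) 1, (‖B x‖₊ : ℝ≥0∞) ^ 2) < ⊤ ∧
    ∀ᵐ x ∂(volume : Measure ℝ), IsSO2 (B (x + α) * A x * (B x)⁻¹)

/-- Homotopy between two (continuous, `1`-periodic, `SL(2,ℝ)`-valued) maps on `ℝ/ℤ`. -/
def Homotopic1 (A A' : ℝ → Matrix (Fin 2) (Fin 2) ℝ) : Prop :=
  ∃ H : ℝ → ℝ → Matrix (Fin 2) (Fin 2) ℝ,
    Continuous (fun p : ℝ × ℝ => H p.1 p.2) ∧
    (∀ t, Per1 (H t)) ∧ (∀ t x, (H t x).det = 1) ∧ H 0 = A ∧ H 1 = A'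


/-- Iterated Gauss map: `α_n = G^n(α)` where `G(x) = {1/x}`. -/
noncomputable def gaussIter (α : ℝ) (n : ℕ) : ℝ := (fun x : ℝ => Int.fract x⁻¹)^[n] α

/-- `β_{n−1} = ∏_{k<n} G^k(α)` (so `betaP α 0 = β_{-1} = 1` and `betaP α (n+1) = β_n`). -/
noncomputable def betaP (α : ℝ) (n : ℕ) : ℝ := ∏ k ∈ Finset.range n, gaussIter α k

/-- The pair `(q_{n−1}, q_n)` of continued fraction denominators of `α ∈ (0,1)∖ℚ`, defined via
the recursion `q_{n+1} = a_{n+1} q_n + q_{n−1}` with partial quotients `a_{n+1} = ⌊1/G^n(α)⌋`. -/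
noncomputable def qpair (α : ℝ) : ℕ → ℤ × ℤ
  | 0 => (0, 1)
  | n + 1 => ((qpair α n).2, ⌊(gaussIter α n)⁻¹⌋ * (qpair α n).2 + (qpair α n).1)

/-- `A^{(n,0)}(x) = A_{(−1)^{n−1} q_{n−1}}(x_* + β_{n−1} x)`. -/
noncomputable def renA0 (α : ℝ) (A : ℝ → Matrix (Fin 2) (Fin 2) ℝ) (xs : ℝ) (n : ℕ) :
    ℝ → Matrix (Fin 2) (Fin 2) ℝ :=
  fun x => iter1Z α A ((-1) ^ (n + 1) * (qpair α n).1) (xs + betaP α n * x)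

/-- `A^{(n,1)}(x) = A_{(−1)^n q_n}(x_* + β_{n−1} x)`. -/
noncomputable def renA1 (α : ℝ) (A : ℝ → Matrix (Fin 2) (Fin 2) ℝ) (xs : ℝ) (n : ℕ) :
    ℝ → Matrix (Fin 2) (Fin 2) ℝ :=
  fun x => iter1Z α A ((-1) ^ n * (qpair α n).2) (xs + betaP α n * x)


/- ===================== auxiliary development ===================== -/

section RotLemmas

lemma Rot_zero : Rot 0 = 1 := by
  simp [Rot, Matrix.one_fin_two]

lemma Rot_mul (a b : ℝ) : Rot a * Rot b = Rot (a + b) := by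
  simp only [Rot, Matrix.mul_fin_two, mul_add, Real.cos_add, Real.sin_add]
  congr 1 <;> ring

lemma Rot_det (a : ℝ) : (Rot a).det = 1 := by
  simp only [Rot, Matrix.det_fin_two_of]
  rw [← Real.cos_sq_add_sin_sq (2 * Real.pi * a)]; ring

lemma Rot_inv (a : ℝ) : (Rot a)⁻¹ = Rot (-a) := by
  apply Matrix.inv_eq_right_inv
  rw [Rot_mul, add_neg_cancel, Rot_zero]

lemma IsSO2.one : IsSO2 1 := ⟨0, Rot_zero.symm⟩

lemma IsSO2.mul {M N : Matrix (Fin 2) (Fin 2) ℝ} (hM : IsSO2 M) (hN : IsSO2 N) :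
    IsSO2 (M * N) := by
  obtain ⟨a, rfl⟩ := hM; obtain ⟨b, rfl⟩ := hN; exact ⟨a + b, (Rot_mul a b)⟩

lemma IsSO2.inv {M : Matrix (Fin 2) (Fin 2) ℝ} (hM : IsSO2 M) : IsSO2 M⁻¹ := by
  obtain ⟨a, rfl⟩ := hM; exact ⟨-a, Rot_inv a⟩

lemma inv_eq_adjugate {M : Matrix (Fin 2) (Fin 2) ℝ} (h : M.det = 1) :
    M⁻¹ = M.adjugate := by
  rw [Matrix.inv_def, h]; simp

lemma mul_inv_cancel_det {M : Matrix (Fin 2) (Fin 2) ℝ} (h : M.det = 1) : M * M⁻¹ = 1 :=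
  Matrix.mul_nonsing_inv M (by rw [h]; exact isUnit_one)

lemma inv_mul_cancel_det {M : Matrix (Fin 2) (Fin 2) ℝ} (h : M.det = 1) : M⁻¹ * M = 1 :=
  Matrix.nonsing_inv_mul M (by rw [h]; exact isUnit_one)

lemma contDiff_matrix {r : WithTop ℕ∞} {f : ℝ → Matrix (Fin 2) (Fin 2) ℝ}
    (h : ∀ i j, ContDiff ℝ r fun x => f x i j) : ContDiff ℝ r f := by
  apply contDiff_pi.mpr; intro i; exact contDiff_pi.mpr fun j => h i j

lemma contDiff_entry {r : WithTop ℕ∞} {f : ℝ → Matrix (Fin 2) (Fin 2) ℝ}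
    (h : ContDiff ℝ r f) (i j : Fin 2) : ContDiff ℝ r fun x => f x i j :=
  (contDiff_pi.mp (contDiff_pi.mp h i) j)

lemma ContDiff.matrix_mul {r : WithTop ℕ∞} {f g : ℝ → Matrix (Fin 2) (Fin 2) ℝ}
    (hf : ContDiff ℝ r f) (hg : ContDiff ℝ r g) : ContDiff ℝ r fun x => f x * g x := by
  apply contDiff_matrix
  intro i j
  have : (fun x => (f x * g x) i j) = fun x => ∑ k, f x i k * g x k j := by
    funext x; exact Matrix.mul_apply
  rw [this]
  exact ContDiff.sum fun k _ => (contDiff_entry hf i k).mul (contDiff_entry hg k j)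

lemma ContDiff.matrix_inv {r : WithTop ℕ∞} {f : ℝ → Matrix (Fin 2) (Fin 2) ℝ}
    (hf : ContDiff ℝ r f) (hdet : ∀ x, (f x).det = 1) : ContDiff ℝ r fun x => (f x)⁻¹ := by
  have : (fun x => (f x)⁻¹) = fun x => !![f x 1 1, -(f x 0 1); -(f x 1 0), f x 0 0] := by
    funext x; rw [inv_eq_adjugate (hdet x), Matrix.adjugate_fin_two]
  rw [this]
  apply contDiff_matrix
  intro i j
  fin_cases i <;> fin_cases j <;> simp <;>
    first
      | exact contDiff_entry hf 1 1
      | exact (contDiff_entry hf 0 1).neg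
      | exact (contDiff_entry hf 1 0).neg
      | exact contDiff_entry hf 0 0

lemma contDiff_Rot {r : WithTop ℕ∞} {w : ℝ → ℝ} (hw : ContDiff ℝ r w) :
    ContDiff ℝ r fun x => Rot (w x) := by
  apply contDiff_matrix
  intro i j
  have hc : ContDiff ℝ r fun x => Real.cos (2 * Real.pi * w x) :=
    Real.contDiff_cos.comp ((contDiff_const.mul hw))
  have hs : ContDiff ℝ r fun x => Real.sin (2 * Real.pi * w x) :=
    Real.contDiff_sin.comp ((contDiff_const.mul hw))
  fin_cases i <;> fin_cases j <;> simp [Rot] <;> first | exact hc | exact hs | exact hs.neg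

end RotLemmas

section iterlem
variable {α : ℝ} {A : ℝ → Matrix (Fin 2) (Fin 2) ℝ}

lemma iter1_zero (x : ℝ) : iter1 α A 0 x = 1 := rfl
lemma iter1_succ (n : ℕ) (x : ℝ) :
    iter1 α A (n + 1) x = A (x + (n : ℝ) * α) * iter1 α A n x := rfl
lemma iter1Z_coe (n : ℕ) : iter1Z α A (n : ℤ) = iter1 α A n := rfl
lemma iter1Z_negSucc (n : ℕ) (x : ℝ) :
    iter1Z α A (Int.negSucc n) x = (iter1 α A (n + 1) (x - ((n : ℝ) + 1) * α))⁻¹ := rfl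
lemma iter1Z_zero (x : ℝ) : iter1Z α A 0 x = 1 := rfl
lemma iter1Z_one (x : ℝ) : iter1Z α A 1 x = A x := by
  show iter1 α A 1 x = A x
  rw [iter1_succ, iter1_zero]; simp

lemma Per1.int {β : Type*} {A : ℝ → β} (h : Per1 A) (m : ℤ) (x : ℝ) : A (x + m) = A x := by
  induction m using Int.induction_on with
  | zero => simp
  | succ k ih =>
      have h2 := h (x + k)
      push_cast
      rw [show x + ((k:ℝ)+1) = x + (k:ℝ) + 1 by ring, h2]
      push_cast at ih; exact ih
  | pred k ih =>
      push_cast at ih ⊢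
      have h2 := h (x + (-(k:ℝ) - 1))
      rw [show x + (-(k:ℝ) - 1) + 1 = x + -(k:ℝ) by ring] at h2
      rw [show x + (-(k:ℝ) - 1) = x + -(k:ℝ) - 1 by ring] at h2 ⊢
      rw [← h2, ih]

variable (hdet : ∀ x, (A x).det = 1)
include hdet

lemma iter1_det (n : ℕ) (x : ℝ) : (iter1 α A n x).det = 1 := by
  induction n with
  | zero => simp [iter1_zero]
  | succ k ih => rw [iter1_succ, Matrix.det_mul, hdet, ih, mul_one]

lemma iter1Z_det (k : ℤ) (x : ℝ) : (iter1Z α A k x).det = 1 := by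
  cases k with
  | ofNat n => exact iter1_det hdet n x
  | negSucc n =>
      rw [iter1Z_negSucc, Matrix.det_nonsing_inv, iter1_det hdet]
      simp

omit hdet

lemma iter1_add (k l : ℕ) (x : ℝ) :
    iter1 α A (k + l) x = iter1 α A k (x + l * α) * iter1 α A l x := by
  induction k with
  | zero => simp [iter1_zero]
  | succ m ih =>
      rw [show m + 1 + l = (m + l) + 1 by ring, iter1_succ, ih, iter1_succ,
        show x + (l:ℝ) * α + (m:ℝ) * α = x + ((m:ℝ) + (l:ℝ)) * α by ring, Matrix.mul_assoc]
      push_cast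
      rfl

lemma iter1_per (hper : Per1 A) (n : ℕ) (m : ℤ) (x : ℝ) :
    iter1 α A n (x + m) = iter1 α A n x := by
  induction n with
  | zero => simp [iter1_zero]
  | succ k ih =>
      rw [iter1_succ, iter1_succ, show x + (m:ℝ) + (k:ℝ) * α = x + (k:ℝ)*α + (m:ℝ) by ring,
        hper.int m, ih]

lemma iter1Z_per (hper : Per1 A) (k : ℤ) (m : ℤ) (x : ℝ) :
    iter1Z α A k (x + m) = iter1Z α A k x := by
  cases k with
  | ofNat n => exact iter1_per hper n m x
  | negSucc n =>
      rw [iter1Z_negSucc, iter1Z_negSucc,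
        show x + (m:ℝ) - ((n:ℝ)+1)*α = x - ((n:ℝ)+1)*α + (m:ℝ) by ring, iter1_per hper]

include hdet

lemma iter1Z_step (k : ℤ) (x : ℝ) :
    iter1Z α A (k + 1) x = A (x + (k : ℝ) * α) * iter1Z α A k x := by
  haveI : ∀ y, Invertible (A y) := fun y =>
    Matrix.invertibleOfIsUnitDet _ (by rw [hdet]; exact isUnit_one)
  cases k with
  | ofNat n =>
      rw [show (Int.ofNat n) + 1 = ((n + 1 : ℕ) : ℤ) by simp, iter1Z_coe,
        show (Int.ofNat n) = ((n : ℕ) : ℤ) from rfl, iter1Z_coe, iter1_succ]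
      norm_num
  | negSucc n =>
      cases n with
      | zero =>
          rw [show Int.negSucc 0 + 1 = 0 from rfl, iter1Z_zero, iter1Z_negSucc]
          have h1 : iter1 α A (0 + 1) (x - (((0:ℕ):ℝ) + 1) * α)
              = A (x + ((Int.negSucc 0 : ℤ) : ℝ) * α) := by
            rw [iter1_succ, iter1_zero, Matrix.mul_one]
            congr 1
            push_cast; ring
          rw [h1]
          exact (Matrix.mul_inv_of_invertible _).symm
      | succ m =>
          rw [show Int.negSucc (m+1) + 1 = Int.negSucc m from rfl, iter1Z_negSucc,
            iter1Z_negSucc]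
          have key : iter1 α A (m + 1 + 1) (x - (((m+1:ℕ):ℝ)+1)*α)
              = iter1 α A (m+1) (x - ((m:ℝ)+1)*α) * A (x + ((Int.negSucc (m+1) : ℤ) : ℝ) * α) := by
            rw [iter1_add (m+1) 1]
            congr 1
            · congr 1; push_cast; ring
            · rw [iter1_succ, iter1_zero, Matrix.mul_one]
              congr 1
              push_cast; ring
          rw [key, Matrix.mul_inv_rev, Matrix.mul_inv_cancel_left_of_invertible]

lemma iter1Z_step_inv (k : ℤ) (x : ℝ) :
    iter1Z α A k x = (A (x + (k : ℝ) * α))⁻¹ * iter1Z α A (k + 1) x := by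
  haveI : ∀ y, Invertible (A y) := fun y =>
    Matrix.invertibleOfIsUnitDet _ (by rw [hdet]; exact isUnit_one)
  rw [iter1Z_step (α := α) hdet, Matrix.inv_mul_cancel_left_of_invertible]

lemma iter1Z_comm (k : ℤ) (y : ℝ) :
    A (y + (k : ℝ) * α) * iter1Z α A k y = iter1Z α A k (y + α) * A y := by
  haveI : ∀ y, Invertible (A y) := fun y =>
    Matrix.invertibleOfIsUnitDet _ (by rw [hdet]; exact isUnit_one)
  induction k using Int.induction_on with
  | zero => simp [iter1Z_zero]
  | succ n ih =>
      rw [iter1Z_step (α := α) hdet, iter1Z_step (α := α) hdet]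
      push_cast at ih ⊢
      rw [ih, ← Matrix.mul_assoc, show y + α + (n:ℝ)*α = y + ((n:ℝ)+1)*α by ring,
        Matrix.mul_assoc]
  | pred n ih =>
      have e1 := iter1Z_step_inv (α := α) hdet (-(n:ℤ) - 1) y
      rw [show -(n:ℤ) - 1 + 1 = -(n:ℤ) by ring] at e1
      have e2 := iter1Z_step_inv (α := α) hdet (-(n:ℤ) - 1) (y + α)
      rw [show -(n:ℤ) - 1 + 1 = -(n:ℤ) by ring] at e2
      push_cast at e1 e2 ih ⊢
      rw [e1, e2, Matrix.mul_inv_cancel_left_of_invertible, Matrix.mul_assoc, ← ih,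
        show y + α + (-(n:ℝ) - 1) * α = y + -(n:ℝ) * α by ring,
        Matrix.inv_mul_cancel_left_of_invertible]

lemma iter1Z_comm_inv (k : ℤ) (z : ℝ) :
    (A (z + (k : ℝ) * α))⁻¹ * iter1Z α A k (z + α) = iter1Z α A k z * (A z)⁻¹ := by
  haveI : ∀ y, Invertible (A y) := fun y =>
    Matrix.invertibleOfIsUnitDet _ (by rw [hdet]; exact isUnit_one)
  have comm := iter1Z_comm (α := α) hdet k z
  have := congrArg (fun M => (A (z + (k:ℝ) * α))⁻¹ * M * (A z)⁻¹) comm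
  rw [Matrix.inv_mul_cancel_left_of_invertible,
    ← Matrix.mul_assoc ((A (z + (k:ℝ) * α))⁻¹) _ (A z),
    Matrix.mul_inv_cancel_right_of_invertible] at this
  exact this.symm

lemma iter1Z_add (hper : Per1 A) (k l : ℤ) (x : ℝ) :
    iter1Z α A (k + l) x = iter1Z α A k (x + (l : ℝ) * α) * iter1Z α A l x := by
  induction l using Int.induction_on with
  | zero => simp [iter1Z_zero]
  | succ n ih =>
      rw [show k + ((n:ℤ) + 1) = (k + n) + 1 by ring, iter1Z_step (α := α) hdet, ih,
        iter1Z_step (α := α) hdet, ← Matrix.mul_assoc, ← Matrix.mul_assoc]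
      congr 1
      push_cast
      have comm := iter1Z_comm (α := α) hdet k (x + (n:ℝ)*α)
      rw [show x + (n:ℝ)*α + (k:ℝ)*α = x + ((k:ℝ) + (n:ℝ))*α by ring] at comm
      rw [show x + ((n:ℝ) + 1) * α = (x + (n:ℝ)*α) + α by ring]
      exact comm
  | pred n ih =>
      have h1 := iter1Z_step_inv (α := α) hdet (-(n:ℤ) - 1) x
      rw [show -(n:ℤ) - 1 + 1 = -(n:ℤ) by ring] at h1
      have h2 := iter1Z_step_inv (α := α) hdet (k + (-(n:ℤ) - 1)) x
      rw [show k + (-(n:ℤ) - 1) + 1 = k + -(n:ℤ) by ring] at h2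
      push_cast at h1 h2 ih ⊢
      rw [h2, ih, h1, ← Matrix.mul_assoc, ← Matrix.mul_assoc]
      congr 1
      have cinv := iter1Z_comm_inv (α := α) hdet k (x + (-(n:ℝ) - 1) * α)
      rw [show x + (-(n:ℝ) - 1) * α + α = x + -(n:ℝ) * α by ring,
        show x + (-(n:ℝ) - 1) * α + (k:ℝ) * α = x + ((k:ℝ) + (-(n:ℝ) - 1)) * α by ring] at cinv
      exact cinv

lemma iter1Z_neg (hper : Per1 A) (k : ℤ) (x : ℝ) :
    iter1Z α A (-k) (x + (k : ℝ) * α) * iter1Z α A k x = 1 := by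
  have := iter1Z_add (α := α) (A := A) hdet hper (-k) k x
  rw [neg_add_cancel, iter1Z_zero] at this
  exact this.symm

end iterlem

noncomputable def ppair (α : ℝ) : ℕ → ℤ × ℤ
  | 0 => (1, 0)
  | n + 1 => ((ppair α n).2, ⌊(gaussIter α n)⁻¹⌋ * (ppair α n).2 + (ppair α n).1)

section cf
variable {α : ℝ} (hα0 : α ∈ Set.Ioo (0:ℝ) 1) (hirr : Irrational α)

lemma gaussIter_zero : gaussIter α 0 = α := rfl
lemma gaussIter_succ (n : ℕ) : gaussIter α (n+1) = Int.fract (gaussIter α n)⁻¹ := by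
  unfold gaussIter
  rw [Function.iterate_succ_apply']

include hα0 hirr

lemma gaussIter_mem (n : ℕ) : gaussIter α n ∈ Set.Ioo (0:ℝ) 1 ∧ Irrational (gaussIter α n) := by
  induction n with
  | zero => exact ⟨hα0, hirr⟩
  | succ k ih =>
      obtain ⟨⟨h0, h1⟩, hir⟩ := ih
      rw [gaussIter_succ]
      have hfr_irr : Irrational (Int.fract (gaussIter α k)⁻¹) := by
        unfold Int.fract
        exact hir.inv.sub_intCast _
      refine ⟨⟨?_, Int.fract_lt_one _⟩, hfr_irr⟩
      rcases lt_or_eq_of_le (Int.fract_nonneg (gaussIter α k)⁻¹) with h | h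
      · exact h
      · exfalso
        rw [← h] at hfr_irr
        exact (hfr_irr.ne_int 0) (by norm_num)

lemma betaP_pos (n : ℕ) : 0 < betaP α n :=
  Finset.prod_pos fun k _ => (gaussIter_mem hα0 hirr k).1.1

omit hα0 hirr
lemma betaP_succ (n : ℕ) : betaP α (n+1) = betaP α n * gaussIter α n :=
  Finset.prod_range_succ _ _
include hα0 hirr

lemma cf_key (n : ℕ) :
    ((qpair α n).1 : ℝ) * α - ((ppair α n).1 : ℝ) = (-1:ℝ)^(n+1) * betaP α n ∧
    ((qpair α n).2 : ℝ) * α - ((ppair α n).2 : ℝ) = (-1:ℝ)^n * betaP α (n+1) := by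
  induction n with
  | zero =>
      constructor
      · show ((0:ℤ):ℝ) * α - ((1:ℤ):ℝ) = (-1:ℝ)^1 * betaP α 0
        unfold betaP; simp
      · show ((1:ℤ):ℝ) * α - ((0:ℤ):ℝ) = (-1:ℝ)^0 * betaP α 1
        unfold betaP
        rw [Finset.prod_range_one]
        simp [gaussIter_zero]
  | succ k ih =>
      obtain ⟨ih1, ih2⟩ := ih
      have hgpos : (0:ℝ) < gaussIter α k := (gaussIter_mem hα0 hirr k).1.1
      have hfr : gaussIter α (k+1) = (gaussIter α k)⁻¹ - ⌊(gaussIter α k)⁻¹⌋ := by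
        rw [gaussIter_succ]; rfl
      have hginv : gaussIter α k * (gaussIter α k)⁻¹ = 1 := mul_inv_cancel₀ hgpos.ne'
      constructor
      · show ((qpair α k).2 : ℝ) * α - ((ppair α k).2 : ℝ) = (-1:ℝ)^(k+1+1) * betaP α (k+1)
        rw [ih2]; ring
      · show ((⌊(gaussIter α k)⁻¹⌋ * (qpair α k).2 + (qpair α k).1 : ℤ) : ℝ) * α
            - ((⌊(gaussIter α k)⁻¹⌋ * (ppair α k).2 + (ppair α k).1 : ℤ) : ℝ)
            = (-1:ℝ)^(k+1) * betaP α (k+1+1)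
        push_cast
        rw [show ((⌊(gaussIter α k)⁻¹⌋:ℝ) * ((qpair α k).2:ℝ) + ((qpair α k).1:ℝ)) * α
            - ((⌊(gaussIter α k)⁻¹⌋:ℝ) * ((ppair α k).2:ℝ) + ((ppair α k).1:ℝ))
            = (⌊(gaussIter α k)⁻¹⌋ : ℝ) * (((qpair α k).2:ℝ) * α - ((ppair α k).2:ℝ))
              + (((qpair α k).1:ℝ) * α - ((ppair α k).1:ℝ)) by ring, ih1, ih2,
          betaP_succ (n := k+1), betaP_succ (n := k), hfr]
        linear_combination ((-1:ℝ)^k * betaP α k) * hginv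

omit hα0 hirr

lemma cf_bezout (n : ℕ) :
    (qpair α n).1 * (ppair α n).2 - (qpair α n).2 * (ppair α n).1 = (-1:ℤ)^(n+1) := by
  induction n with
  | zero => rfl
  | succ k ih =>
      show (qpair α k).2 * (⌊(gaussIter α k)⁻¹⌋ * (ppair α k).2 + (ppair α k).1)
        - (⌊(gaussIter α k)⁻¹⌋ * (qpair α k).2 + (qpair α k).1) * (ppair α k).2 = (-1:ℤ)^(k+1+1)
      rw [show (qpair α k).2 * (⌊(gaussIter α k)⁻¹⌋ * (ppair α k).2 + (ppair α k).1)
        - (⌊(gaussIter α k)⁻¹⌋ * (qpair α k).2 + (qpair α k).1) * (ppair α k).2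
        = -((qpair α k).1 * (ppair α k).2 - (qpair α k).2 * (ppair α k).1) by ring, ih]
      ring

end cf

lemma Rot_entries (θ : ℝ) :
    Rot θ 0 0 = Real.cos (2 * Real.pi * θ) ∧ Rot θ 1 0 = Real.sin (2 * Real.pi * θ) ∧
    Rot θ 0 1 = -Real.sin (2 * Real.pi * θ) ∧ Rot θ 1 1 = Real.cos (2 * Real.pi * θ) := by
  refine ⟨?_, ?_, ?_, ?_⟩ <;> simp [Rot]

/-- helper: split `1 ≤ r` into `r = m + 1` with `m ≠ ⊤` (in `WithTop ℕ∞`). -/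
lemma exists_pred (r : ℕ∞) (hr : 1 ≤ r) :
    ∃ m : WithTop ℕ∞, (r : WithTop ℕ∞) = m + 1 ∧ m ≤ (r : WithTop ℕ∞) ∧ m ≠ ⊤ := by
  cases r with
  | top =>
      refine ⟨((⊤ : ℕ∞) : WithTop ℕ∞), ?_, le_refl _, ?_⟩
      · rfl
      · exact WithTop.coe_ne_top
  | coe k =>
      obtain ⟨j, rfl⟩ : ∃ j, k = j + 1 := by
        cases k with
        | zero => simp at hr
        | succ j => exact ⟨j, rfl⟩
      refine ⟨((j : ℕ∞) : WithTop ℕ∞), ?_, ?_, WithTop.coe_ne_top⟩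
      · push_cast; rfl
      · push_cast
        exact_mod_cast le_of_lt (by exact_mod_cast Nat.lt_succ_self j)

theorem so2_lift {r : ℕ∞} (hr : 1 ≤ r) {S : ℝ → Matrix (Fin 2) (Fin 2) ℝ}
    (hS : ContDiff ℝ r S) (hSO : ∀ y, IsSO2 (S y)) :
    ∃ s : ℝ → ℝ, ContDiff ℝ (r : WithTop ℕ∞) s ∧ ∀ y, S y = Rot (s y) := by
  obtain ⟨m, hm, hmle, hmne⟩ := exists_pred r hr
  have h1r : (1 : WithTop ℕ∞) ≤ (r : WithTop ℕ∞) := by exact_mod_cast hr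
  set π := Real.pi with hπ
  set c : ℝ → ℝ := fun y => S y 0 0 with hc_def
  set d : ℝ → ℝ := fun y => S y 1 0 with hd_def
  have hc : ContDiff ℝ (r : WithTop ℕ∞) c := contDiff_entry hS 0 0
  have hd : ContDiff ℝ (r : WithTop ℕ∞) d := contDiff_entry hS 1 0
  have hcd : ∀ y, c y ^ 2 + d y ^ 2 = 1 := by
    intro y
    obtain ⟨θ, hθ⟩ := hSO y
    have h00 := (Rot_entries θ).1
    have h10 := (Rot_entries θ).2.1
    simp only [hc_def, hd_def, hθ, h00, h10]
    rw [add_comm]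
    exact Real.sin_sq_add_cos_sq _
  have hcdiff : Differentiable ℝ c := hc.differentiable (ne_of_gt (lt_of_lt_of_le zero_lt_one h1r))
  have hddiff : Differentiable ℝ d := hd.differentiable (ne_of_gt (lt_of_lt_of_le zero_lt_one h1r))
  -- deriv is C^m
  have hc' : ContDiff ℝ m (deriv c) := by
    rw [hm] at hc
    exact (contDiff_succ_iff_deriv.mp hc).2.2
  have hd' : ContDiff ℝ m (deriv d) := by
    rw [hm] at hd
    exact (contDiff_succ_iff_deriv.mp hd).2.2
  set ψ : ℝ → ℝ := fun y => c y * deriv d y - d y * deriv c y with hψ_def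
  have hψ : ContDiff ℝ m ψ :=
    ((hc.of_le hmle).mul hd').sub ((hd.of_le hmle).mul hc')
  have hψcont : Continuous ψ := hψ.continuous
  obtain ⟨θ0, hθ0⟩ := hSO 0
  set s : ℝ → ℝ := fun y => θ0 + (2 * π)⁻¹ * ∫ t in (0:ℝ)..y, ψ t with hs_def
  have hsderiv : ∀ y, HasDerivAt s ((2 * π)⁻¹ * ψ y) y := by
    intro y
    have hint : HasDerivAt (fun u => ∫ t in (0:ℝ)..u, ψ t) (ψ y) y :=
      intervalIntegral.integral_hasDerivAt_right (hψcont.intervalIntegrable _ _)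
        (hψcont.stronglyMeasurableAtFilter _ _) hψcont.continuousAt
    exact (hint.const_mul ((2 * π)⁻¹)).const_add θ0
  have hsdiff : Differentiable ℝ s := fun y => (hsderiv y).differentiableAt
  have hs_deriv_eq : deriv s = fun y => (2 * π)⁻¹ * ψ y := funext fun y => (hsderiv y).deriv
  have hscd : ContDiff ℝ (r : WithTop ℕ∞) s := by
    rw [hm]
    refine contDiff_succ_iff_deriv.mpr ⟨hsdiff, ?_, ?_⟩
    · intro h; exact absurd h hmne
    · rw [hs_deriv_eq]
      exact contDiff_const.mul hψ
  have h2π : (2 * π) ≠ 0 := ne_of_gt Real.two_pi_pos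
  -- the comparison function
  set C : ℝ → ℝ := fun y => Real.cos (2 * π * s y) with hC_def
  set D : ℝ → ℝ := fun y => Real.sin (2 * π * s y) with hD_def
  have key : ∀ y, c y = C y ∧ d y = D y := by
    have hconst : ∀ y, (c y - C y)^2 + (d y - D y)^2 = (c 0 - C 0)^2 + (d 0 - D 0)^2 := by
      intro y
      set h : ℝ → ℝ := fun y => (c y - C y)^2 + (d y - D y)^2 with hh_def
      have hder : ∀ z, HasDerivAt h 0 z := by
        intro z
        have hcz : HasDerivAt c (deriv c z) z := (hcdiff z).hasDerivAt
        have hdz : HasDerivAt d (deriv d z) z := (hddiff z).hasDerivAt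
        have hsz : HasDerivAt s ((2 * π)⁻¹ * ψ z) z := hsderiv z
        have harg : HasDerivAt (fun y => 2 * π * s y) (ψ z) z := by
          have := hsz.const_mul (2 * π)
          have h2 : 2 * π * ((2 * π)⁻¹ * ψ z) = ψ z := by rw [← mul_assoc, mul_inv_cancel₀ h2π, one_mul]
          rwa [h2] at this
        have hCz : HasDerivAt C (-Real.sin (2 * π * s z) * ψ z) z :=
          by have := (Real.hasDerivAt_cos (2 * π * s z)).comp z harg; exact this
        have hDz : HasDerivAt D (Real.cos (2 * π * s z) * ψ z) z :=
          by have := (Real.hasDerivAt_sin (2 * π * s z)).comp z harg; exact this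
        have hsum : HasDerivAt h
            (2 * (c z - C z) ^ 1 * (deriv c z - (-Real.sin (2 * π * s z) * ψ z))
             + 2 * (d z - D z) ^ 1 * (deriv d z - (Real.cos (2 * π * s z) * ψ z))) z := by
          exact ((hcz.sub hCz).pow 2).add ((hdz.sub hDz).pow 2)
        -- orthogonality relation
        have e1 : c z * deriv c z + d z * deriv d z = 0 := by
          have hFz : HasDerivAt (fun y => c y ^ 2 + d y ^ 2)
              (2 * c z ^ 1 * deriv c z + 2 * d z ^ 1 * deriv d z) z :=
            (hcz.pow 2).add (hdz.pow 2)
          have hFconst : (fun y => c y ^ 2 + d y ^ 2) = fun _ => (1:ℝ) := funext hcd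
          rw [hFconst] at hFz
          have := hFz.unique (hasDerivAt_const z 1)
          nlinarith [this]
        have e2 := hcd z
        have hzero : (2 * (c z - C z) ^ 1 * (deriv c z - (-Real.sin (2 * π * s z) * ψ z))
             + 2 * (d z - D z) ^ 1 * (deriv d z - (Real.cos (2 * π * s z) * ψ z))) = 0 := by
          simp only [pow_one, hC_def, hD_def, hψ_def]
          set cc := c z; set dd := d z
          set c' := deriv c z; set d' := deriv d z
          set CC := Real.cos (2 * π * s z); set DD := Real.sin (2 * π * s z)
          linear_combination (2 - 2*CC*cc - 2*DD*dd) * e1 + (2*CC*c' + 2*DD*d') * e2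
        rw [hzero] at hsum
        exact hsum
      have hdiffh : Differentiable ℝ (fun y => (c y - C y)^2 + (d y - D y)^2) :=
        fun z => (hder z).differentiableAt
      have := is_const_of_deriv_eq_zero hdiffh (fun z => (hder z).deriv) y 0
      exact this
    have hzero0 : (c 0 - C 0)^2 + (d 0 - D 0)^2 = 0 := by
      have hs0 : s 0 = θ0 := by
        simp [hs_def, intervalIntegral.integral_same]
      have hc0 : c 0 = Real.cos (2 * π * θ0) := by
        simp only [hc_def, hθ0]; exact (Rot_entries θ0).1
      have hd0 : d 0 = Real.sin (2 * π * θ0) := by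
        simp only [hd_def, hθ0]; exact (Rot_entries θ0).2.1
      simp [hC_def, hD_def, hs0, hc0, hd0]
    intro y
    have h := hconst y
    rw [hzero0] at h
    constructor
    · nlinarith [sq_nonneg (c y - C y), sq_nonneg (d y - D y)]
    · nlinarith [sq_nonneg (c y - C y), sq_nonneg (d y - D y)]
  refine ⟨s, hscd, ?_⟩
  intro y
  obtain ⟨θ, hθ⟩ := hSO y
  have hcC : c y = Real.cos (2 * π * s y) := (key y).1
  have hdD : d y = Real.sin (2 * π * s y) := (key y).2
  have h00 : S y 0 0 = Real.cos (2 * π * θ) := by rw [hθ]; exact (Rot_entries θ).1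
  have h10 : S y 1 0 = Real.sin (2 * π * θ) := by rw [hθ]; exact (Rot_entries θ).2.1
  have hcosθ : Real.cos (2 * π * θ) = Real.cos (2 * π * s y) := by
    rw [← h00, ← hcC]
  have hsinθ : Real.sin (2 * π * θ) = Real.sin (2 * π * s y) := by
    rw [← h10, ← hdD]
  rw [hθ]
  unfold Rot
  rw [hcosθ, hsinθ]

/-- signed Birkhoff-type sums for the shift by one -/
noncomputable def SB (s : ℝ → ℝ) : ℤ → ℝ → ℝ
  | Int.ofNat k => fun y => ∑ j ∈ Finset.range k, s (y - j - 1)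
  | Int.negSucc k => fun y => -∑ j ∈ Finset.range (k+1), s (y + j)

section cobound
variable {s : ℝ → ℝ}

lemma SB_ofNat (k : ℕ) (y : ℝ) : SB s (k : ℤ) y = ∑ j ∈ Finset.range k, s (y - j - 1) := rfl
lemma SB_negSucc (k : ℕ) (y : ℝ) :
    SB s (Int.negSucc k) y = -∑ j ∈ Finset.range (k+1), s (y + j) := rfl

lemma SB_rec (k : ℤ) (y : ℝ) : SB s (k + 1) y = SB s k y + s (y - (k:ℝ) - 1) := by
  cases k with
  | ofNat k =>
      rw [show (Int.ofNat k) + 1 = ((k+1 : ℕ) : ℤ) by simp, SB_ofNat,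
        show (Int.ofNat k) = ((k:ℕ) : ℤ) from rfl, SB_ofNat, Finset.sum_range_succ]
      norm_num
  | negSucc m =>
      cases m with
      | zero =>
          rw [show Int.negSucc 0 + 1 = ((0:ℕ) : ℤ) by rfl, SB_ofNat, SB_negSucc]
          simp
      | succ j =>
          rw [show Int.negSucc (j+1) + 1 = Int.negSucc j by rfl, SB_negSucc, SB_negSucc,
            Finset.sum_range_succ (fun i => s (y + i)) (j+1),
            show y - ((Int.negSucc (j+1) : ℤ):ℝ) - 1 = y + ((j+1 : ℕ):ℝ) by push_cast; ring]
          ring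

lemma SB_shift (k : ℤ) (y : ℝ) : SB s (k + 1) (y + 1) = SB s k y + s y := by
  cases k with
  | ofNat k =>
      rw [show (Int.ofNat k) + 1 = ((k+1 : ℕ) : ℤ) by simp, SB_ofNat,
        show (Int.ofNat k) = ((k:ℕ) : ℤ) from rfl, SB_ofNat,
        Finset.sum_range_succ' (fun j => s (y + 1 - j - 1)) k]
      have h0 : y + 1 - ((0:ℕ):ℝ) - 1 = y := by norm_num
      have hj : ∀ j : ℕ, y + 1 - ((j+1 : ℕ):ℝ) - 1 = y - (j:ℝ) - 1 := fun j => by push_cast; ring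
      rw [h0, Finset.sum_congr rfl (fun j _ => congrArg s (hj j))]
  | negSucc m =>
      cases m with
      | zero =>
          rw [show Int.negSucc 0 + 1 = ((0:ℕ) : ℤ) by rfl, SB_ofNat, SB_negSucc]
          simp
      | succ j =>
          rw [show Int.negSucc (j+1) + 1 = Int.negSucc j by rfl, SB_negSucc, SB_negSucc,
            Finset.sum_range_succ' (fun i => s (y + i)) (j+1)]
          have h0 : y + ((0:ℕ):ℝ) = y := by norm_num
          have hj : ∀ i : ℕ, y + ((i+1 : ℕ):ℝ) = y + 1 + (i:ℝ) := fun i => by push_cast; ring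
          rw [h0, Finset.sum_congr rfl (fun i _ => congrArg s (hj i))]
          ring

lemma SB_contDiff {r : WithTop ℕ∞} (hs : ContDiff ℝ r s) (k : ℤ) :
    ContDiff ℝ r (SB s k) := by
  cases k with
  | ofNat k =>
      show ContDiff ℝ r fun y => ∑ j ∈ Finset.range k, s (y - j - 1)
      exact ContDiff.sum fun j _ =>
        hs.comp (((contDiff_id (E := ℝ)).sub contDiff_const).sub contDiff_const)
  | negSucc m =>
      show ContDiff ℝ r fun y => -∑ j ∈ Finset.range (m+1), s (y + j)
      exact (ContDiff.sum fun j _ => hs.comp (contDiff_id.add contDiff_const)).neg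

/-- the interpolated coboundary transfer function -/
noncomputable def cobW (s : ℝ → ℝ) (y : ℝ) : ℝ :=
  -SB s ⌊y⌋ y - Real.smoothTransition (Int.fract y) * s (Int.fract y - 1)

/-- local smooth model of `cobW` -/
noncomputable def cobG (s : ℝ → ℝ) (m : ℤ) (y : ℝ) : ℝ :=
  -SB s m y - Real.smoothTransition (y - m) * s (y - m - 1)
    + (1 - Real.smoothTransition (y - m + 1)) * s (y - m)

lemma cobW_eq_cobG (m : ℤ) {y : ℝ} (hy : y ∈ Set.Ioo ((m:ℝ) - 1) ((m:ℝ) + 1)) :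
    cobW s y = cobG s m y := by
  obtain ⟨hy1, hy2⟩ := hy
  rcases lt_or_ge y m with h | h
  · -- y ∈ (m-1, m): floor = m - 1
    have hfl : ⌊y⌋ = m - 1 := by
      rw [Int.floor_eq_iff]
      constructor <;> push_cast <;> [linarith; linarith]
    have hfr : Int.fract y = y - m + 1 := by
      rw [Int.fract, hfl]; push_cast; ring
    have hη0 : Real.smoothTransition (y - m) = 0 :=
      Real.smoothTransition.zero_of_nonpos (by linarith)
    have hSB : SB s m y = SB s (m - 1) y + s (y - (m:ℝ)) := by
      have := SB_rec (s := s) (m - 1) y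
      rw [show m - 1 + 1 = m by ring] at this
      rw [this]
      push_cast
      ring_nf
    unfold cobW cobG
    rw [hfl, hfr, hη0, hSB]
    ring_nf
  · -- y ∈ [m, m+1): floor = m
    have hfl : ⌊y⌋ = m := by
      rw [Int.floor_eq_iff]
      constructor <;> push_cast <;> [linarith; linarith]
    have hfr : Int.fract y = y - m := by rw [Int.fract, hfl]
    have hη1 : Real.smoothTransition (y - m + 1) = 1 :=
      Real.smoothTransition.one_of_one_le (by linarith)
    unfold cobW cobG
    rw [hfl, hfr, hη1]
    ring_nf

lemma cobG_contDiff {r : ℕ∞} (hs : ContDiff ℝ (r : WithTop ℕ∞) s) (m : ℤ) :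
    ContDiff ℝ (r : WithTop ℕ∞) (cobG s m) := by
  have hη : ContDiff ℝ (r : WithTop ℕ∞) Real.smoothTransition :=
    Real.smoothTransition.contDiff
  have haff1 : ContDiff ℝ (r : WithTop ℕ∞) fun y : ℝ => y - (m:ℝ) :=
    contDiff_id.sub contDiff_const
  have haff2 : ContDiff ℝ (r : WithTop ℕ∞) fun y : ℝ => y - (m:ℝ) - 1 :=
    haff1.sub contDiff_const
  have haff3 : ContDiff ℝ (r : WithTop ℕ∞) fun y : ℝ => y - (m:ℝ) + 1 :=
    haff1.add contDiff_const
  exact ((SB_contDiff hs m).neg.sub ((hη.comp haff1).mul (hs.comp haff2))).add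
    ((contDiff_const.sub (hη.comp haff3)).mul (hs.comp haff1))

lemma cobW_contDiff {r : ℕ∞} (hs : ContDiff ℝ (r : WithTop ℕ∞) s) :
    ContDiff ℝ (r : WithTop ℕ∞) (cobW s) := by
  rw [contDiff_iff_contDiffAt]
  intro y
  have hmem : y ∈ Set.Ioo ((⌊y⌋ : ℝ) - 1) ((⌊y⌋ : ℝ) + 1) := by
    constructor
    · linarith [Int.floor_le y]
    · linarith [Int.lt_floor_add_one y]
  have hev : cobW s =ᶠ[nhds y] cobG s ⌊y⌋ := by
    filter_upwards [Ioo_mem_nhds hmem.1 hmem.2] with z hz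
    exact cobW_eq_cobG ⌊y⌋ hz
  exact ((cobG_contDiff hs ⌊y⌋).contDiffAt).congr_of_eventuallyEq hev

lemma cobW_rec (y : ℝ) : cobW s (y + 1) = cobW s y - s y := by
  unfold cobW
  rw [Int.floor_add_one, Int.fract_add_one, SB_shift]
  ring
end cobound

/-- conjugated generator predicate -/
def SOConj (α : ℝ) (A F : ℝ → Matrix (Fin 2) (Fin 2) ℝ) (km : ℤ × ℤ) : Prop :=
  ∀ y : ℝ, IsSO2 (F (y + (km.1 : ℝ) * α + (km.2 : ℝ)) * iter1Z α A km.1 y * (F y)⁻¹)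

section soconj
variable {α : ℝ} {A F : ℝ → Matrix (Fin 2) (Fin 2) ℝ}
  (hper : Per1 A) (hdet : ∀ x, (A x).det = 1) (hFdet : ∀ y, (F y).det = 1)

include hdet hFdet

lemma SOConj.zero : SOConj α A F (0, 0) := by
  intro y
  have : y + (((0,0) : ℤ × ℤ).1 : ℝ) * α + (((0,0) : ℤ × ℤ).2 : ℝ) = y := by
    norm_num
  rw [this, iter1Z_zero, Matrix.mul_one, mul_inv_cancel_det (hFdet y)]
  exact IsSO2.one

include hper

lemma SOConj.add {u v : ℤ × ℤ} (hu : SOConj α A F u) (hv : SOConj α A F v) :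
    SOConj α A F (u + v) := by
  obtain ⟨k, m⟩ := u
  obtain ⟨k', m'⟩ := v
  intro y
  set z := y + (k : ℝ) * α + (m : ℝ) with hz
  have harg : y + (((k,m) + (k',m') : ℤ × ℤ).1 : ℝ) * α + (((k,m) + (k',m') : ℤ × ℤ).2 : ℝ)
      = z + (k' : ℝ) * α + (m' : ℝ) := by
    show y + ((k + k' : ℤ) : ℝ) * α + ((m + m' : ℤ) : ℝ) = _
    push_cast
    ring
  have hco : iter1Z α A ((k,m).1 + (k',m').1) y
      = iter1Z α A k' z * iter1Z α A k y := by
    show iter1Z α A (k + k') y = _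
    rw [add_comm k k', iter1Z_add hdet hper k' k y]
    congr 1
    have := iter1Z_per (α := α) (A := A) hper k' m (y + (k:ℝ) * α)
    rw [← this]
  rw [harg]
  show IsSO2 (F (z + (k' : ℝ) * α + (m' : ℝ)) * iter1Z α A ((k,m).1 + (k',m').1) y * (F y)⁻¹)
  rw [hco]
  have expand : F (z + (k' : ℝ) * α + (m' : ℝ)) * (iter1Z α A k' z * iter1Z α A k y) * (F y)⁻¹
      = (F (z + (k' : ℝ) * α + (m' : ℝ)) * iter1Z α A k' z * (F z)⁻¹)
        * (F z * iter1Z α A k y * (F y)⁻¹) := by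
    rw [show (F (z + (k' : ℝ) * α + (m' : ℝ)) * iter1Z α A k' z * (F z)⁻¹)
        * (F z * iter1Z α A k y * (F y)⁻¹)
        = F (z + (k' : ℝ) * α + (m' : ℝ)) * iter1Z α A k' z * ((F z)⁻¹ * F z)
          * iter1Z α A k y * (F y)⁻¹ by noncomm_ring,
      inv_mul_cancel_det (hFdet z), Matrix.mul_one]
    noncomm_ring
  rw [expand]
  exact (hv z).mul (hu y)

lemma SOConj.neg {u : ℤ × ℤ} (hu : SOConj α A F u) : SOConj α A F (-u) := by
  obtain ⟨k, m⟩ := u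
  intro y
  set z := y + ((-k : ℤ) : ℝ) * α + ((-m : ℤ) : ℝ) with hz
  have hzy : z + (k : ℝ) * α + (m : ℝ) = y := by rw [hz]; push_cast; ring
  have h1 := hu z
  rw [hzy] at h1
  have hinv : (iter1Z α A k z)⁻¹ = iter1Z α A (-k) y := by
    have hl : iter1Z α A (-k) (z + (k:ℝ) * α) * iter1Z α A k z = 1 := iter1Z_neg hdet hper k z
    have : iter1Z α A (-k) (z + (k:ℝ) * α) = iter1Z α A (-k) y := by
      have hzk : z + (k:ℝ) * α = y + ((-m : ℤ) : ℝ) := by rw [hz]; push_cast; ring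
      rw [hzk, iter1Z_per hper]
    rw [← this]
    exact Matrix.inv_eq_left_inv hl
  have h2 := h1.inv
  rw [Matrix.mul_inv_rev, Matrix.mul_inv_rev, Matrix.nonsing_inv_nonsing_inv _ (by
    rw [hFdet]; exact isUnit_one), hinv] at h2
  show IsSO2 (F z * iter1Z α A (-(k,m).1) y * (F y)⁻¹)
  show IsSO2 (F z * iter1Z α A (-k) y * (F y)⁻¹)
  rw [← Matrix.mul_assoc] at h2
  exact h2

lemma SOConj.zsmul {u : ℤ × ℤ} (hu : SOConj α A F u) (a : ℤ) : SOConj α A F (a • u) := by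
  induction a using Int.induction_on with
  | zero => rw [zero_smul]; exact SOConj.zero hdet hFdet
  | succ b ih =>
      rw [add_smul, one_smul]
      exact SOConj.add hper hdet hFdet ih hu
  | pred b ih =>
      rw [sub_smul, one_smul, sub_eq_add_neg]
      exact SOConj.add hper hdet hFdet ih (SOConj.neg hper hdet hFdet hu)

end soconj


/-- If a `C^r`-renormalization representative of `(f_α, A)` is
`C^r`-conjugate to a cocycle of rotations, then `(f_α, A)` is `C^r`-conjugate to a cocycle of
rotations. -/
theorem stmt15 (α : ℝ) (hα0 : α ∈ Set.Ioo (0:ℝ) 1) (hirr : Irrational α)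
    (r : ℕ∞) (hr : 1 ≤ r)
    (A : ℝ → Matrix (Fin 2) (Fin 2) ℝ)
    (hA : ContDiff ℝ r A) (hper : Per1 A) (hdet : ∀ x, (A x).det = 1)
    -- some `C^r`-renormalization representative at some level `n ≥ 1` around some `x_*`
    -- is `C^r`-conjugate to rotations
    (hren : ∃ n : ℕ, 1 ≤ n ∧ ∃ xs : ℝ, ∃ Bn : ℝ → Matrix (Fin 2) (Fin 2) ℝ,
      ContDiff ℝ r Bn ∧ (∀ x, (Bn x).det = 1) ∧
      (∀ x, Bn (x + 1) * renA0 α A xs n x * (Bn x)⁻¹ = 1) ∧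
      ∃ C : ℝ → Matrix (Fin 2) (Fin 2) ℝ,
        ContDiff ℝ r C ∧ Per1 C ∧ (∀ x, (C x).det = 1) ∧
        ∀ x, IsSO2 (C (x + gaussIter α n) *
          (Bn (x + gaussIter α n) * renA1 α A xs n x * (Bn x)⁻¹) * (C x)⁻¹)) :
    ∃ B : ℝ → Matrix (Fin 2) (Fin 2) ℝ,
      ContDiff ℝ r B ∧ Per1 B ∧ (∀ x, (B x).det = 1) ∧
      ∀ x, IsSO2 (B (x + α) * A x * (B x)⁻¹) := by
  obtain ⟨n, hn1, xs, Bn, hBncd, hBndet, hBn0, C, hCcd, hCper, hCdet, hCconj⟩ := hren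
  -- notation
  set β : ℝ := betaP α n with hβ_def
  have hβpos : 0 < β := betaP_pos hα0 hirr n
  have hβne : β ≠ 0 := ne_of_gt hβpos
  set g : ℝ := gaussIter α n with hg_def
  set q : ℤ := (qpair α n).1 with hq_def
  set q' : ℤ := (qpair α n).2 with hq'_def
  set p : ℤ := (ppair α n).1 with hp_def
  set p' : ℤ := (ppair α n).2 with hp'_def
  obtain ⟨hk1, hk2⟩ := cf_key hα0 hirr n
  have hbez : q * p' - q' * p = (-1:ℤ)^(n+1) := cf_bezout n
  have hb1 : betaP α (n+1) = β * g := betaP_succ n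
  -- rescaling map and conjugacy candidate (before periodization)
  set φ : ℝ → ℝ := fun y => (y - xs) / β with hφ_def
  set F : ℝ → Matrix (Fin 2) (Fin 2) ℝ := fun y => C (φ y) * Bn (φ y) with hF_def
  have hφcd : ContDiff ℝ r φ := (contDiff_id.sub contDiff_const).div_const β
  have hFcd : ContDiff ℝ r F := (hCcd.comp hφcd).matrix_mul (hBncd.comp hφcd)
  have hFdet : ∀ y, (F y).det = 1 := by
    intro y
    show (C (φ y) * Bn (φ y)).det = 1
    rw [Matrix.det_mul, hCdet, hBndet, mul_one]
  have hyx : ∀ y : ℝ, xs + β * φ y = y := by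
    intro y
    show xs + β * ((y - xs) / β) = y
    field_simp
    ring
  have hφx : ∀ t : ℝ, φ (xs + β * t) = t := by
    intro t
    show (xs + β * t - xs) / β = t
    field_simp
    ring
  have hFt : ∀ t : ℝ, F (xs + β * t) = C t * Bn t := by
    intro t
    show C (φ (xs + β * t)) * Bn (φ (xs + β * t)) = _
    rw [hφx t]
  -- sign bookkeeping
  have hsqR : (-1:ℝ)^(n+1) * (-1:ℝ)^(n+1) = 1 := by
    rw [← pow_add]
    exact Even.neg_one_pow ⟨n+1, by ring⟩
  have hsqRn : (-1:ℝ)^n * (-1:ℝ)^n = 1 := by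
    rw [← pow_add]
    exact Even.neg_one_pow ⟨n, by ring⟩
  have hsqZ : (-1:ℤ)^(n+1) * (-1:ℤ)^(n+1) = 1 := by
    rw [← pow_add]
    exact Even.neg_one_pow ⟨n+1, by ring⟩
  have hsqZn : (-1:ℤ)^n * (-1:ℤ)^n = 1 := by
    rw [← pow_add]
    exact Even.neg_one_pow ⟨n, by ring⟩
  -- the two generators
  set e0 : ℤ × ℤ := ((-1:ℤ)^(n+1) * q, (-1:ℤ)^n * p) with he0_def
  set e1 : ℤ × ℤ := ((-1:ℤ)^n * q', (-1:ℤ)^(n+1) * p') with he1_def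
  -- generator 0 is SO2-conjugated (in fact trivial)
  have hP0 : SOConj α A F e0 := by
    intro y
    have htr : ((e0.1 : ℤ) : ℝ) * α + ((e0.2 : ℤ) : ℝ) = β := by
      show (((-1:ℤ)^(n+1) * q : ℤ) : ℝ) * α + (((-1:ℤ)^n * p : ℤ) : ℝ) = β
      push_cast
      linear_combination ((-1:ℝ)^(n+1)) * hk1 + β * hsqR
    have harg : y + ((e0.1 : ℤ) : ℝ) * α + ((e0.2 : ℤ) : ℝ) = xs + β * (φ y + 1) := by
      rw [add_assoc, htr, mul_add, mul_one, ← add_assoc, hyx y]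
    have hiter : iter1Z α A e0.1 y = renA0 α A xs n (φ y) := by
      show iter1Z α A e0.1 y = iter1Z α A ((-1)^(n+1) * (qpair α n).1) (xs + betaP α n * φ y)
      rw [← hq_def, ← hβ_def, hyx y]
    rw [harg, hiter, hFt (φ y + 1)]
    show IsSO2 (C (φ y + 1) * Bn (φ y + 1) * renA0 α A xs n (φ y) * (C (φ y) * Bn (φ y))⁻¹)
    rw [Matrix.mul_inv_rev]
    have hre : C (φ y + 1) * Bn (φ y + 1) * renA0 α A xs n (φ y)
          * ((Bn (φ y))⁻¹ * (C (φ y))⁻¹)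
        = C (φ y + 1) * (Bn (φ y + 1) * renA0 α A xs n (φ y) * (Bn (φ y))⁻¹)
          * (C (φ y))⁻¹ := by
      noncomm_ring
    rw [hre, hBn0 (φ y), Matrix.mul_one, hCper (φ y), mul_inv_cancel_det (hCdet (φ y))]
    exact IsSO2.one
  -- generator 1 is SO2-conjugated (hypothesis)
  have hP1 : SOConj α A F e1 := by
    intro y
    have htr : ((e1.1 : ℤ) : ℝ) * α + ((e1.2 : ℤ) : ℝ) = β * g := by
      show (((-1:ℤ)^n * q' : ℤ) : ℝ) * α + (((-1:ℤ)^(n+1) * p' : ℤ) : ℝ) = β * g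
      push_cast
      rw [← hb1]
      linear_combination ((-1:ℝ)^n) * hk2 + (betaP α (n+1)) * hsqRn
    have harg : y + ((e1.1 : ℤ) : ℝ) * α + ((e1.2 : ℤ) : ℝ) = xs + β * (φ y + g) := by
      rw [add_assoc, htr, mul_add, ← add_assoc, hyx y]
    have hiter : iter1Z α A e1.1 y = renA1 α A xs n (φ y) := by
      show iter1Z α A e1.1 y = iter1Z α A ((-1)^n * (qpair α n).2) (xs + betaP α n * φ y)
      rw [← hq'_def, ← hβ_def, hyx y]
    rw [harg, hiter, hFt (φ y + g)]
    show IsSO2 (C (φ y + g) * Bn (φ y + g) * renA1 α A xs n (φ y) * (C (φ y) * Bn (φ y))⁻¹)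
    rw [Matrix.mul_inv_rev]
    have hre : C (φ y + g) * Bn (φ y + g) * renA1 α A xs n (φ y)
          * ((Bn (φ y))⁻¹ * (C (φ y))⁻¹)
        = C (φ y + g) * (Bn (φ y + g) * renA1 α A xs n (φ y) * (Bn (φ y))⁻¹)
          * (C (φ y))⁻¹ := by
      noncomm_ring
    rw [hre]
    exact hCconj (φ y)
  -- the subgroup generated contains (1,0) and (0,1)
  have hPa : SOConj α A F (1, 0) := by
    have h := SOConj.add hper hdet hFdet
      (SOConj.zsmul hper hdet hFdet hP0 p') (SOConj.zsmul hper hdet hFdet hP1 p)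
    have he : p' • e0 + p • e1 = ((1:ℤ), (0:ℤ)) := by
      rw [he0_def, he1_def, Prod.smul_mk, Prod.smul_mk, Prod.mk_add_mk]
      rw [Prod.mk.injEq]
      constructor
      · show p' * ((-1:ℤ)^(n+1) * q) + p * ((-1:ℤ)^n * q') = 1
        linear_combination ((-1:ℤ)^(n+1)) * hbez + hsqZ
      · show p' * ((-1:ℤ)^n * p) + p * ((-1:ℤ)^(n+1) * p') = 0
        ring
    rw [he] at h
    exact h
  have hPb : SOConj α A F (0, 1) := by
    have h := SOConj.add hper hdet hFdet
      (SOConj.zsmul hper hdet hFdet hP0 q') (SOConj.zsmul hper hdet hFdet hP1 q)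
    have he : q' • e0 + q • e1 = ((0:ℤ), (1:ℤ)) := by
      rw [he0_def, he1_def, Prod.smul_mk, Prod.smul_mk, Prod.mk_add_mk]
      rw [Prod.mk.injEq]
      constructor
      · show q' * ((-1:ℤ)^(n+1) * q) + q * ((-1:ℤ)^n * q') = 0
        ring
      · show q' * ((-1:ℤ)^n * p) + q * ((-1:ℤ)^(n+1) * p') = 1
        linear_combination (-(-1:ℤ)^n) * hbez + hsqZn
    rw [he] at h
    exact h
  -- extract the two functional relations
  have hconj : ∀ y, IsSO2 (F (y + α) * A y * (F y)⁻¹) := by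
    intro y
    have h := hPa y
    have harg : y + (((1, (0:ℤ)) : ℤ × ℤ).1 : ℝ) * α + (((1, (0:ℤ)) : ℤ × ℤ).2 : ℝ)
        = y + α := by push_cast; ring
    rw [harg] at h
    have hit : iter1Z α A ((((1:ℤ), (0:ℤ)) : ℤ × ℤ).1) y = A y := iter1Z_one y
    rw [hit] at h
    exact h
  have hSso : ∀ y, IsSO2 (F (y + 1) * (F y)⁻¹) := by
    intro y
    have h := hPb y
    have harg : y + ((((0:ℤ), (1:ℤ)) : ℤ × ℤ).1 : ℝ) * α + ((((0:ℤ), (1:ℤ)) : ℤ × ℤ).2 : ℝ)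
        = y + 1 := by push_cast; ring
    rw [harg] at h
    have hit : iter1Z α A ((((0:ℤ), (1:ℤ)) : ℤ × ℤ).1) y = 1 := iter1Z_zero y
    rw [hit, Matrix.mul_one] at h
    exact h
  -- lift the boundary rotation to an angle
  set S : ℝ → Matrix (Fin 2) (Fin 2) ℝ := fun y => F (y + 1) * (F y)⁻¹ with hS_def
  have hScd : ContDiff ℝ r S :=
    (hFcd.comp (contDiff_id.add contDiff_const)).matrix_mul (hFcd.matrix_inv hFdet)
  obtain ⟨s, hscd, hSrot⟩ := so2_lift hr hScd hSso
  -- transfer function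
  have hwcd : ContDiff ℝ r (cobW s) := cobW_contDiff hscd
  have hFshift : ∀ y, F (y + 1) = Rot (s y) * F y := by
    intro y
    rw [← hSrot y]
    show F (y+1) = F (y+1) * (F y)⁻¹ * F y
    rw [Matrix.mul_assoc, inv_mul_cancel_det (hFdet y), Matrix.mul_one]
  refine ⟨fun y => Rot (cobW s y) * F y, ?_, ?_, ?_, ?_⟩
  · exact (contDiff_Rot hwcd).matrix_mul hFcd
  · intro y
    show Rot (cobW s (y + 1)) * F (y + 1) = Rot (cobW s y) * F y
    rw [cobW_rec y, hFshift y, ← Matrix.mul_assoc, Rot_mul, sub_add_cancel]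
  · intro y
    show (Rot (cobW s y) * F y).det = 1
    rw [Matrix.det_mul, Rot_det, hFdet, mul_one]
  · intro x
    obtain ⟨θ, hθ⟩ := hconj x
    refine ⟨cobW s (x + α) + θ + -(cobW s x), ?_⟩
    show Rot (cobW s (x + α)) * F (x + α) * A x * (Rot (cobW s x) * F x)⁻¹ = _
    rw [Matrix.mul_inv_rev, Rot_inv]
    have hre : Rot (cobW s (x + α)) * F (x + α) * A x * ((F x)⁻¹ * Rot (-(cobW s x)))
        = Rot (cobW s (x + α)) * (F (x + α) * A x * (F x)⁻¹) * Rot (-(cobW s x)) := by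
      noncomm_ring
    rw [hre, hθ, Rot_mul, Rot_mul]
end

section
/- Let 𝔻 be the open unit disk in ℂ, let Φ(μ) = ∫_𝔻 (1−|z|²)^{-1} dμ(z) for a Borel probability measure μ on 𝔻, and let M_∞ = {μ : Φ(μ) < ∞} with the weak-* topology. There exists a Borel measurable map 𝔅 : M_∞ → 𝔻 such that: (i) for every holomorphic automorphism g of 𝔻 (Möbius transformation preserving 𝔻) and every μ ∈ M_∞, one has 𝔅(g_*μ) = g(𝔅(μ)); and (ii) (1−|𝔅(μ)|²)^{-1} ≤ Φ(μ) for every μ ∈ M_∞. -/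
open MeasureTheory Filter Topology
open scoped ENNReal

/-- The open unit disk in `ℂ`. -/
abbrev UnitDisk : Set ℂ := Metric.ball (0:ℂ) 1

/-- `Φ(μ) = ∫ (1−|z|²)⁻¹ dμ(z)` for a probability measure on the unit disk. -/
noncomputable def PhiDisk (μ : ProbabilityMeasure UnitDisk) : ℝ≥0∞ :=
  ∫⁻ z, ENNReal.ofReal ((1 - ‖(z : ℂ)‖ ^ 2)⁻¹) ∂(μ : Measure UnitDisk)

/-- The Möbius maps `z ↦ λ(z−a)/(1−āz)`; for `|λ| = 1` and `|a| < 1` these are exactly the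
holomorphic automorphisms of the unit disk. -/
noncomputable def moebAuto (lam a z : ℂ) : ℂ :=
  lam * (z - a) / (1 - (starRingEnd ℂ) a * z)

namespace S17

noncomputable def phi (z : UnitDisk) : ℝ := (1 - ‖(z : ℂ)‖ ^ 2)⁻¹

lemma norm_lt (z : UnitDisk) : ‖(z : ℂ)‖ < 1 := by
  simpa using mem_ball_zero_iff.mp z.2

lemma sq_lt (z : UnitDisk) : 0 < 1 - ‖(z : ℂ)‖ ^ 2 := by
  have h := norm_lt z
  nlinarith [norm_nonneg (z : ℂ)]

lemma phi_pos (z : UnitDisk) : 0 < phi z := inv_pos.2 (sq_lt z)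

lemma one_le_phi (z : UnitDisk) : 1 ≤ phi z := by
  have h := sq_lt z
  have hm := mul_inv_cancel₀ h.ne'
  have h2 : 1 - ‖(z:ℂ)‖^2 ≤ 1 := by nlinarith [norm_nonneg (z : ℂ)]
  rw [phi]
  nlinarith [inv_pos.2 h]

lemma phi_mul (z : UnitDisk) : (1 - ‖(z : ℂ)‖ ^ 2) * phi z = 1 :=
  mul_inv_cancel₀ (sq_lt z).ne'

lemma continuous_phi : Continuous phi := by
  apply Continuous.inv₀
  · fun_prop
  · exact fun z => (sq_lt z).ne'


abbrev P := ProbabilityMeasure UnitDisk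

/-- truncation as a bounded continuous function -/
noncomputable def bcf (h : UnitDisk → ℝ) (hc : Continuous h) (n : ℕ) :
    BoundedContinuousFunction UnitDisk ℝ :=
  BoundedContinuousFunction.ofNormedAddCommGroup (fun z => min (max (h z) 0) n)
    (by fun_prop) n
    (by
      intro z
      have h0 : (0:ℝ) ≤ min (max (h z) 0) n := le_min (le_max_right _ _) (by positivity)
      rw [Real.norm_eq_abs, abs_of_nonneg h0]
      exact min_le_right _ _)

lemma bcf_apply (h : UnitDisk → ℝ) (hc : Continuous h) (n : ℕ) (z : UnitDisk) :
    bcf h hc n z = min (max (h z) 0) n := rfl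

noncomputable def intE (h : UnitDisk → ℝ) (μ : P) : ℝ≥0∞ :=
  ⨆ n : ℕ, ENNReal.ofReal (∫ z, min (max (h z) 0) n ∂(μ : Measure UnitDisk))

lemma integrable_trunc (h : UnitDisk → ℝ) (hc : Continuous h) (n : ℕ) (μ : P) :
    Integrable (fun z => min (max (h z) 0) n) (μ : Measure UnitDisk) := by
  refine Integrable.mono' (integrable_const (n:ℝ))
    ((bcf h hc n).continuous.aestronglyMeasurable) (ae_of_all _ fun z => ?_)
  have h0 : (0:ℝ) ≤ min (max (h z) 0) n := le_min (le_max_right _ _) (by positivity)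
  rw [Real.norm_eq_abs, abs_of_nonneg h0]
  exact min_le_right _ _

lemma ofReal_max0 (x : ℝ) : ENNReal.ofReal (max x 0) = ENNReal.ofReal x := by
  rcases le_total x 0 with h | h
  · rw [max_eq_right h, ENNReal.ofReal_zero, eq_comm, ENNReal.ofReal_eq_zero.2 h]
  · rw [max_eq_left h]

lemma intE_eq (h : UnitDisk → ℝ) (hc : Continuous h) (μ : P) :
    intE h μ = ∫⁻ z, ENNReal.ofReal (h z) ∂(μ : Measure UnitDisk) := by
  have hmeas : ∀ n : ℕ, Measurable fun z : UnitDisk =>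
      ENNReal.ofReal (min (max (h z) 0) n) := by
    intro n
    exact ENNReal.measurable_ofReal.comp (bcf h hc n).continuous.measurable
  have hmono : Monotone fun (n : ℕ) (z : UnitDisk) =>
      ENNReal.ofReal (min (max (h z) 0) n) := by
    intro n m hnm
    intro z
    exact ENNReal.ofReal_le_ofReal (min_le_min le_rfl (by exact_mod_cast hnm))
  calc intE h μ = ⨆ n : ℕ, ∫⁻ z, ENNReal.ofReal (min (max (h z) 0) n)
        ∂(μ : Measure UnitDisk) := by
        refine iSup_congr fun n => ?_
        exact ofReal_integral_eq_lintegral_ofReal (integrable_trunc h hc n μ)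
          (ae_of_all _ fun z => le_min (le_max_right _ _) (by positivity))
    _ = ∫⁻ z, ⨆ n : ℕ, ENNReal.ofReal (min (max (h z) 0) n)
        ∂(μ : Measure UnitDisk) := (lintegral_iSup hmeas hmono).symm
    _ = ∫⁻ z, ENNReal.ofReal (h z) ∂(μ : Measure UnitDisk) := by
        refine lintegral_congr fun z => ?_
        rw [← ofReal_max0 (h z)]
        apply le_antisymm
        · exact iSup_le fun n => ENNReal.ofReal_le_ofReal (min_le_left _ _)
        · have : ENNReal.ofReal (max (h z) 0) =
            ENNReal.ofReal (min (max (h z) 0) (⌈max (h z) 0⌉₊ : ℝ)) := by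
            rw [min_eq_left (Nat.le_ceil _)]
          rw [this]
          exact le_iSup (fun n : ℕ => ENNReal.ofReal (min (max (h z) 0) (n:ℝ)))
            (⌈max (h z) 0⌉₊)

lemma measurable_intE (h : UnitDisk → ℝ) (hc : Continuous h) :
    @Measurable P ℝ≥0∞ (borel P) _ (intE h) := by
  letI : MeasurableSpace P := borel P
  haveI : BorelSpace P := ⟨rfl⟩
  refine Measurable.iSup fun n => ?_
  refine ENNReal.measurable_ofReal.comp ?_
  have : Continuous fun μ : P => ∫ z, (bcf h hc n) z ∂(μ : Measure UnitDisk) :=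
    MeasureTheory.ProbabilityMeasure.continuous_integral_boundedContinuousFunction _
  exact this.measurable

noncomputable def intR (h : UnitDisk → ℝ) (μ : P) : ℝ :=
  (intE h μ).toReal - (intE (fun z => - h z) μ).toReal

lemma measurable_intR (h : UnitDisk → ℝ) (hc : Continuous h) :
    @Measurable P ℝ (borel P) _ (intR h) := by
  exact ((measurable_intE h hc).ennreal_toReal).sub
    ((measurable_intE _ hc.neg).ennreal_toReal)

lemma intR_eq (h : UnitDisk → ℝ) (hc : Continuous h) (μ : P)
    (hi : Integrable h (μ : Measure UnitDisk)) :
    intR h μ = ∫ z, h z ∂(μ : Measure UnitDisk) := by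
  rw [intR, intE_eq h hc, intE_eq (fun z => -h z) hc.neg,
    integral_eq_lintegral_pos_part_sub_lintegral_neg_part hi]

/-! ### integral quantities -/

noncomputable def cInt (μ : P) : ℝ := ∫ z, phi z ∂(μ : Measure UnitDisk)
noncomputable def mInt (μ : P) : ℂ := ∫ z, (z : ℂ) * (phi z : ℝ) ∂(μ : Measure UnitDisk)
noncomputable def qInt (μ : P) : ℝ := 2 * cInt μ - 1
noncomputable def sInt (μ : P) : ℝ := Real.sqrt ((qInt μ)^2 - 4 * ‖mInt μ‖^2)

noncomputable def hre (z : UnitDisk) : ℝ := (z : ℂ).re * phi z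
noncomputable def him (z : UnitDisk) : ℝ := (z : ℂ).im * phi z

lemma continuous_hre : Continuous hre := by
  exact (Complex.continuous_re.comp continuous_subtype_val).mul continuous_phi
lemma continuous_him : Continuous him := by
  exact (Complex.continuous_im.comp continuous_subtype_val).mul continuous_phi

noncomputable def mC (μ : P) : ℂ := (intR hre μ : ℂ) + (intR him μ : ℂ) * Complex.I

noncomputable def Bfun (μ : P) : ℂ :=
  if intE phi μ < ⊤ then
    ((2 / ((2 * (intE phi μ).toReal - 1) +
        Real.sqrt ((2 * (intE phi μ).toReal - 1)^2 - 4 * ‖mC μ‖^2)) : ℝ) : ℂ) * mC μ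
  else 0

lemma PhiE_eq (μ : P) : intE phi μ = PhiDisk μ := intE_eq phi continuous_phi μ

lemma measurable_Bfun : @Measurable P ℂ (borel P) _ Bfun := by
  letI : MeasurableSpace P := borel P
  haveI : BorelSpace P := ⟨rfl⟩
  have hphiE : Measurable (intE phi) := measurable_intE phi continuous_phi
  have hre' : Measurable (intR hre) := measurable_intR hre continuous_hre
  have him' : Measurable (intR him) := measurable_intR him continuous_him
  have hmC : Measurable mC := by
    apply Measurable.add
    · exact Complex.measurable_ofReal.comp hre'
    · exact (Complex.measurable_ofReal.comp him').mul_const _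
  have hset : MeasurableSet {μ : P | intE phi μ < ⊤} := hphiE measurableSet_Iio
  refine Measurable.ite hset ?_ measurable_const
  refine Measurable.mul ?_ hmC
  refine Complex.measurable_ofReal.comp ?_
  apply Measurable.div measurable_const
  apply Measurable.add
  · exact (hphiE.ennreal_toReal.const_mul 2).sub measurable_const
  · apply Measurable.sqrt
    refine Measurable.sub ?_ ?_
    · exact ((hphiE.ennreal_toReal.const_mul 2).sub measurable_const).pow_const 2
    · exact (((measurable_norm.comp hmC)).pow_const 2).const_mul 4

/-! ### facts under finiteness -/

variable {μ : P}

lemma integrable_phi (hμ : PhiDisk μ < ⊤) : Integrable phi (μ : Measure UnitDisk) := by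
  refine ⟨continuous_phi.aestronglyMeasurable, ?_⟩
  rw [HasFiniteIntegral]
  have : ∀ z : UnitDisk, (‖phi z‖₊ : ℝ≥0∞) = ENNReal.ofReal (phi z) := fun z =>
    Real.enorm_eq_ofReal (phi_pos z).le
  calc ∫⁻ z, (‖phi z‖₊ : ℝ≥0∞) ∂(μ : Measure UnitDisk)
      = ∫⁻ z, ENNReal.ofReal (phi z) ∂(μ : Measure UnitDisk) := lintegral_congr this
    _ < ⊤ := hμ

lemma integrable_dom {E : Type} [NormedAddCommGroup E] (f : UnitDisk → E)
    (hf : AEStronglyMeasurable f (μ : Measure UnitDisk)) (K : ℝ)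
    (hK : ∀ z, ‖f z‖ ≤ K * phi z) (hμ : PhiDisk μ < ⊤) :
    Integrable f (μ : Measure UnitDisk) :=
  Integrable.mono' ((integrable_phi hμ).const_mul K) hf (ae_of_all _ hK)

lemma integrable_zphi (hμ : PhiDisk μ < ⊤) :
    Integrable (fun z : UnitDisk => (z : ℂ) * (phi z : ℝ)) (μ : Measure UnitDisk) := by
  refine integrable_dom _ ?_ 1 (fun z => ?_) hμ
  · exact (continuous_subtype_val.mul
      (Complex.continuous_ofReal.comp continuous_phi)).aestronglyMeasurable
  · rw [norm_mul, one_mul, Complex.norm_real, Real.norm_eq_abs, abs_of_nonneg (phi_pos z).le]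
    nlinarith [norm_lt z, phi_pos z, norm_nonneg (z:ℂ)]

lemma PhiDisk_eq (hμ : PhiDisk μ < ⊤) : PhiDisk μ = ENNReal.ofReal (cInt μ) := by
  rw [cInt, ofReal_integral_eq_lintegral_ofReal (integrable_phi hμ)
    (ae_of_all _ fun z => (phi_pos z).le)]
  rfl

lemma one_le_cInt (hμ : PhiDisk μ < ⊤) : 1 ≤ cInt μ := by
  have h1 : ∫ z, (1:ℝ) ∂(μ : Measure UnitDisk) = 1 := by simp
  rw [cInt, ← h1]
  exact integral_mono (integrable_const 1) (integrable_phi hμ) fun z => one_le_phi z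

lemma mC_eq (hμ : PhiDisk μ < ⊤) : mC μ = mInt μ := by
  have hzphi := integrable_zphi hμ
  have hir : Integrable hre (μ : Measure UnitDisk) := by
    refine integrable_dom _ continuous_hre.aestronglyMeasurable 1 (fun z => ?_) hμ
    rw [hre, one_mul, Real.norm_eq_abs, abs_mul, abs_of_nonneg (phi_pos z).le]
    have h1 : |(z:ℂ).re| ≤ ‖(z:ℂ)‖ := by
      exact Complex.abs_re_le_norm _
    nlinarith [phi_pos z, norm_lt z, abs_nonneg (z:ℂ).re, norm_nonneg (z:ℂ)]
  have hii : Integrable him (μ : Measure UnitDisk) := by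
    refine integrable_dom _ continuous_him.aestronglyMeasurable 1 (fun z => ?_) hμ
    rw [him, one_mul, Real.norm_eq_abs, abs_mul, abs_of_nonneg (phi_pos z).le]
    have h1 : |(z:ℂ).im| ≤ ‖(z:ℂ)‖ := by
      exact Complex.abs_im_le_norm _
    nlinarith [phi_pos z, norm_lt z, abs_nonneg (z:ℂ).im, norm_nonneg (z:ℂ)]
  have hre_eq : ∀ z : UnitDisk, hre z = RCLike.re ((z:ℂ) * (phi z : ℝ)) := fun z => by
    simp [hre, Complex.mul_re]
  have him_eq : ∀ z : UnitDisk, him z = RCLike.im ((z:ℂ) * (phi z : ℝ)) := fun z => by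
    simp [him, Complex.mul_im]
  apply Complex.ext
  · have : (mC μ).re = intR hre μ := by simp [mC]
    rw [this, intR_eq _ continuous_hre μ hir]
    calc ∫ z, hre z ∂(μ : Measure UnitDisk)
        = ∫ z, RCLike.re ((z:ℂ) * (phi z : ℝ)) ∂(μ : Measure UnitDisk) :=
          integral_congr_ae (ae_of_all _ hre_eq)
      _ = (mInt μ).re := by rw [integral_re hzphi]; rfl
  · have : (mC μ).im = intR him μ := by simp [mC]
    rw [this, intR_eq _ continuous_him μ hii]
    calc ∫ z, him z ∂(μ : Measure UnitDisk)
        = ∫ z, RCLike.im ((z:ℂ) * (phi z : ℝ)) ∂(μ : Measure UnitDisk) :=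
          integral_congr_ae (ae_of_all _ him_eq)
      _ = (mInt μ).im := by rw [integral_im hzphi]; rfl

lemma Bfun_eq (hμ : PhiDisk μ < ⊤) :
    Bfun μ = ((2 / (qInt μ + sInt μ) : ℝ) : ℂ) * mInt μ := by
  have hlt : intE phi μ < ⊤ := by rw [PhiE_eq]; exact hμ
  have hc : (intE phi μ).toReal = cInt μ := by
    rw [PhiE_eq, PhiDisk_eq hμ, ENNReal.toReal_ofReal]
    linarith [one_le_cInt hμ]
  rw [Bfun, if_pos hlt, hc, mC_eq hμ, qInt, sInt, qInt]

lemma integral_two_phi_sub_one (hμ : PhiDisk μ < ⊤) :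
    ∫ z, (2 * phi z - 1) ∂(μ : Measure UnitDisk) = qInt μ := by
  rw [integral_sub ((integrable_phi hμ).const_mul 2) (integrable_const 1),
    integral_const_mul, integral_const]
  simp [qInt, cInt]

lemma qInt_ge (hμ : PhiDisk μ < ⊤) :
    Real.sqrt (1 + 4 * ‖mInt μ‖^2) ≤ qInt μ := by
  have hzphi := integrable_zphi hμ
  by_cases hm0 : mInt μ = 0
  · rw [hm0]
    simp only [norm_zero]
    norm_num
    linarith [one_le_cInt hμ, show qInt μ = 2 * cInt μ - 1 from rfl]
  · set m := mInt μ with hm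
    set r := ‖m‖ with hr
    have hr0 : 0 < r := norm_pos_iff.2 hm0
    set ω : ℂ := (starRingEnd ℂ) m / (r : ℝ) with hω
    have hωnorm : ‖ω‖ = 1 := by
      rw [hω, norm_div, RCLike.norm_conj, Complex.norm_real, Real.norm_eq_abs,
        abs_of_pos hr0, div_self hr0.ne']
    have hrne : ((r:ℝ):ℂ) ≠ 0 := Complex.ofReal_ne_zero.mpr hr0.ne'
    have h1 : (starRingEnd ℂ) m * m = ((r : ℝ) : ℂ)^2 := by
      rw [mul_comm, Complex.mul_conj, Complex.normSq_eq_norm_sq, ← hr]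
      push_cast
      ring
    have hωm : ω * m = (r : ℂ) := by
      rw [hω, div_mul_eq_mul_div, h1, sq, mul_div_assoc, div_self hrne, mul_one]
    set u : UnitDisk → ℝ := fun z => (ω * ((z:ℂ) * (phi z : ℝ))).re with hu
    have hu_int : Integrable u (μ : Measure UnitDisk) := (hzphi.const_mul ω).re
    have h_intu : ∫ z, u z ∂(μ : Measure UnitDisk) = r := by
      have h1 : ∫ z, ω * ((z:ℂ) * (phi z : ℝ)) ∂(μ : Measure UnitDisk) = ω * m := by
        rw [integral_const_mul]; rfl
      have h2 := integral_re (hzphi.const_mul ω)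
      rw [h1, hωm] at h2
      calc ∫ z, u z ∂(μ : Measure UnitDisk)
          = ∫ z, RCLike.re (ω * ((z:ℂ) * (phi z : ℝ))) ∂(μ : Measure UnitDisk) := rfl
        _ = RCLike.re ((r:ℝ):ℂ) := h2
        _ = r := by rw [RCLike.re_to_complex, Complex.ofReal_re]
    have hg_int : Integrable (fun z : UnitDisk => ((2 * u z : ℝ):ℂ) * Complex.I)
        (μ : Measure UnitDisk) := ((hu_int.const_mul 2).ofReal).mul_const Complex.I
    have hw_int : Integrable (fun z => 1 + ((2 * u z : ℝ):ℂ) * Complex.I)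
        (μ : Measure UnitDisk) := (integrable_const (1:ℂ)).add hg_int
    have h_intw : ∫ z, (1 + ((2 * u z : ℝ):ℂ) * Complex.I) ∂(μ : Measure UnitDisk)
        = 1 + ((2*r : ℝ):ℂ) * Complex.I := by
      rw [integral_add (integrable_const 1) hg_int, integral_const]
      simp only [probReal_univ, one_smul]
      congr 1
      rw [integral_mul_const]
      have hor : ∫ a, ((2 * u a : ℝ):ℂ) ∂(μ : Measure UnitDisk)
          = ((∫ a, 2 * u a ∂(μ : Measure UnitDisk) : ℝ):ℂ) := integral_ofReal
      rw [hor, integral_const_mul, h_intu]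
    have hnorm1 : ∀ x : ℝ, ‖(1:ℂ) + (x:ℝ) * Complex.I‖ = Real.sqrt (1 + x^2) := by
      intro x
      rw [Complex.norm_def, Complex.normSq_apply]
      simp
      ring_nf
    have hptwise : ∀ z, ‖(1:ℂ) + ((2 * u z : ℝ):ℂ) * Complex.I‖ ≤ 2 * phi z - 1 := by
      intro z
      have hb1 : 1 ≤ phi z := one_le_phi z
      have huz : |u z| ≤ ‖(z:ℂ)‖ * phi z := by
        have h1 : |u z| ≤ ‖ω * ((z:ℂ) * (phi z : ℝ))‖ := by
          exact Complex.abs_re_le_norm _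
        rw [norm_mul, hωnorm, one_mul, norm_mul, Complex.norm_real, Real.norm_eq_abs,
          abs_of_pos (phi_pos z)] at h1
        exact h1
      have hu2 : (u z)^2 ≤ (‖(z:ℂ)‖ * phi z)^2 := by
        rw [← sq_abs]
        exact pow_le_pow_left₀ (abs_nonneg _) huz 2
      have hkey : ‖(z:ℂ)‖^2 * phi z^2 = phi z^2 - phi z := by
        linear_combination (-(phi z)) * (phi_mul z)
      rw [hnorm1 (2 * u z)]
      have hle : 1 + (2 * u z)^2 ≤ (2 * phi z - 1)^2 := by nlinarith
      calc Real.sqrt (1 + (2*u z)^2) ≤ Real.sqrt ((2 * phi z - 1)^2) :=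
            Real.sqrt_le_sqrt hle
        _ = 2 * phi z - 1 := Real.sqrt_sq (by linarith)
    calc Real.sqrt (1 + 4 * r^2)
        = ‖∫ z, (1 + ((2 * u z : ℝ):ℂ) * Complex.I) ∂(μ : Measure UnitDisk)‖ := by
          rw [h_intw, hnorm1]
          ring_nf
      _ ≤ ∫ z, ‖(1:ℂ) + ((2 * u z : ℝ):ℂ) * Complex.I‖ ∂(μ : Measure UnitDisk) :=
          norm_integral_le_integral_norm _
      _ ≤ ∫ z, (2 * phi z - 1) ∂(μ : Measure UnitDisk) :=
          integral_mono hw_int.norm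
            (((integrable_phi hμ).const_mul 2).sub (integrable_const 1)) hptwise
      _ = qInt μ := integral_two_phi_sub_one hμ

lemma sInt_facts (hμ : PhiDisk μ < ⊤) :
    1 ≤ sInt μ ∧ sInt μ^2 = qInt μ^2 - 4*‖mInt μ‖^2 ∧ 1 ≤ qInt μ ∧
      2*‖mInt μ‖ < qInt μ := by
  set r := ‖mInt μ‖
  have hr0 : 0 ≤ r := norm_nonneg _
  have hs := qInt_ge hμ
  have h0 : (0:ℝ) ≤ 1 + 4*r^2 := by positivity
  have hq1 : 1 ≤ qInt μ := by
    refine le_trans ?_ hs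
    calc (1:ℝ) = Real.sqrt 1 := (Real.sqrt_one).symm
      _ ≤ Real.sqrt (1 + 4*‖mInt μ‖^2) := Real.sqrt_le_sqrt (by nlinarith)
  have hq2 : 1 + 4*r^2 ≤ qInt μ^2 := by
    have := pow_le_pow_left₀ (Real.sqrt_nonneg _) hs 2
    rwa [Real.sq_sqrt h0] at this
  have hs2 : sInt μ^2 = qInt μ^2 - 4*r^2 := Real.sq_sqrt (by linarith)
  have hs1 : 1 ≤ sInt μ := by
    calc (1:ℝ) = Real.sqrt 1 := (Real.sqrt_one).symm
      _ ≤ sInt μ := Real.sqrt_le_sqrt (by linarith)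
  refine ⟨hs1, hs2, hq1, ?_⟩
  nlinarith

lemma norm_Bfun_lt (hμ : PhiDisk μ < ⊤) : ‖Bfun μ‖ < 1 := by
  obtain ⟨hs1, hs2, hq1, hrq⟩ := sInt_facts hμ
  have hd : 0 < qInt μ + sInt μ := by linarith
  rw [Bfun_eq hμ, norm_mul, Complex.norm_real, Real.norm_eq_abs,
    abs_of_nonneg (by positivity)]
  rw [div_mul_eq_mul_div, div_lt_one hd]
  nlinarith [norm_nonneg (mInt μ)]

lemma Bfun_root (hμ : PhiDisk μ < ⊤) :
    (starRingEnd ℂ) (mInt μ) * (Bfun μ)^2 - ((qInt μ : ℝ):ℂ) * Bfun μ + mInt μ = 0 := by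
  obtain ⟨hs1, hs2, hq1, hrq⟩ := sInt_facts hμ
  set q := qInt μ; set s := sInt μ; set m := mInt μ
  have hd : (0:ℝ) < q + s := by linarith
  have hdC : ((q:ℝ):ℂ) + ((s:ℝ):ℂ) ≠ 0 := by
    rw [← Complex.ofReal_add]
    exact_mod_cast hd.ne'
  have hrc : (starRingEnd ℂ) m * m = ((‖m‖:ℝ):ℂ)^2 := RCLike.conj_mul m
  have hs' : ((s:ℝ):ℂ)^2 = ((q:ℝ):ℂ)^2 - 4*((‖m‖:ℝ):ℂ)^2 := by
    exact_mod_cast congrArg (fun x : ℝ => (x:ℂ)) hs2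
  rw [Bfun_eq hμ]
  have hcast : ((2/(q+s) : ℝ) : ℂ) = 2/(((q:ℝ):ℂ) + ((s:ℝ):ℂ)) := by push_cast; ring
  rw [hcast]
  field_simp
  linear_combination (4*m) * hrc + m * hs'

lemma Bfun_bound (hμ : PhiDisk μ < ⊤) : (1 - ‖Bfun μ‖^2)⁻¹ ≤ cInt μ := by
  obtain ⟨hs1, hs2, hq1, hrq⟩ := sInt_facts hμ
  set q := qInt μ; set s := sInt μ; set r := ‖mInt μ‖
  have hr0 : 0 ≤ r := norm_nonneg _
  have hd : (0:ℝ) < q + s := by linarith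
  have hB : ‖Bfun μ‖ = 2*r/(q+s) := by
    rw [Bfun_eq hμ, norm_mul, Complex.norm_real, Real.norm_eq_abs,
      abs_of_nonneg (by positivity)]
    ring
  have h1 : 1 - ‖Bfun μ‖^2 = 2*s/(q+s) := by
    rw [hB]
    field_simp
    linear_combination (-1:ℝ) * hs2
  have hcq : q = 2 * cInt μ - 1 := rfl
  rw [h1, inv_div]
  rw [div_le_iff₀ (by linarith)]
  nlinarith

lemma root_unique (m : ℂ) (q : ℝ) (hq : 1 ≤ q) {b w : ℂ} (hb : ‖b‖ < 1) (hw : ‖w‖ < 1)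
    (hrb : (starRingEnd ℂ) m * b^2 - ((q:ℝ):ℂ)*b + m = 0)
    (hrw : (starRingEnd ℂ) m * w^2 - ((q:ℝ):ℂ)*w + m = 0) : w = b := by
  have hfac : (w - b) * ((starRingEnd ℂ) m * (w + b) - ((q:ℝ):ℂ)) = 0 := by
    linear_combination hrw - hrb
  rcases mul_eq_zero.mp hfac with h | h
  · exact sub_eq_zero.mp h
  · have h2 : (starRingEnd ℂ) m * (w + b) = ((q:ℝ):ℂ) := by linear_combination h
    have hm : m = (starRingEnd ℂ) m * (b * w) := by linear_combination hrw - w * h2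
    by_cases hm0 : m = 0
    · exfalso
      rw [hm0, map_zero, zero_mul] at h2
      have : (q:ℝ) = 0 := by exact_mod_cast h2.symm
      linarith
    · exfalso
      have hnorm := congrArg norm hm
      rw [norm_mul, RCLike.norm_conj, norm_mul] at hnorm
      have hmn : ‖m‖ ≠ 0 := (norm_pos_iff.2 hm0).ne'
      have habs : ‖b‖ * ‖w‖ = 1 :=
        (mul_left_cancel₀ hmn (by rw [mul_one]; exact hnorm)).symm
      have habs' : ‖b‖ * ‖w‖ = 1 := by
        exact habs
      nlinarith [norm_nonneg b, norm_nonneg w]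

/-! ### Möbius algebra -/

lemma ofReal_normSq (w : ℂ) : ((‖w‖^2 : ℝ):ℂ) = w * (starRingEnd ℂ) w := by
  rw [Complex.mul_conj]
  exact congrArg Complex.ofReal (by rw [Complex.sq_norm])

lemma ofReal_normSq' (w : ℂ) : ((‖w‖:ℝ):ℂ)^2 = w * (starRingEnd ℂ) w := by
  rw [← Complex.ofReal_pow]; exact ofReal_normSq w

lemma one_sub_mul_ne (a w : ℂ) (ha : ‖a‖ < 1) (hw : ‖w‖ < 1) :
    (1:ℂ) - (starRingEnd ℂ) a * w ≠ 0 := by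
  intro h
  rw [sub_eq_zero] at h
  have := congrArg norm h
  rw [norm_one, norm_mul, RCLike.norm_conj] at this
  nlinarith [norm_nonneg a, norm_nonneg w]

lemma one_sub_aa_ne (a : ℂ) (ha : ‖a‖ < 1) : (1:ℂ) - a * (starRingEnd ℂ) a ≠ 0 := by
  intro h
  rw [sub_eq_zero] at h
  have := congrArg norm h
  rw [norm_one, norm_mul, RCLike.norm_conj] at this
  nlinarith [norm_nonneg a]

lemma moeb_norm_lt (lam a b : ℂ) (hl : ‖lam‖ = 1) (ha : ‖a‖ < 1) (hb : ‖b‖ < 1) :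
    ‖moebAuto lam a b‖ < 1 := by
  have key : ‖1 - (starRingEnd ℂ) a * b‖^2 - ‖b - a‖^2 = (1 - ‖a‖^2)*(1 - ‖b‖^2) := by
    simp only [Complex.sq_norm, Complex.normSq_apply, Complex.sub_re,
      Complex.sub_im, Complex.mul_re, Complex.mul_im, Complex.one_re, Complex.one_im,
      Complex.conj_re, Complex.conj_im]
    ring
  have hpos : 0 < (1 - ‖a‖^2)*(1 - ‖b‖^2) := by
    have h1 : 0 < 1 - ‖a‖^2 := by nlinarith [norm_nonneg a]
    have h2 : 0 < 1 - ‖b‖^2 := by nlinarith [norm_nonneg b]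
    exact mul_pos h1 h2
  have hn1 : 0 < ‖1 - (starRingEnd ℂ) a * b‖ := by
    nlinarith [norm_nonneg (1 - (starRingEnd ℂ) a * b), norm_nonneg (b - a)]
  rw [moebAuto, norm_div, norm_mul, hl, one_mul, div_lt_one hn1]
  nlinarith [norm_nonneg (b - a)]

lemma key_alg (lam a b M M' : ℂ) (q q' : ℝ)
    (hlam : lam * (starRingEnd ℂ) lam = 1)
    (hA : (1:ℂ) - a * (starRingEnd ℂ) a ≠ 0)
    (hb : (1:ℂ) - (starRingEnd ℂ) a * b ≠ 0)
    (hM' : M' * (1 - a * (starRingEnd ℂ) a)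
        = lam * (M - a*((q:ℝ):ℂ) + a^2 * (starRingEnd ℂ) M))
    (hq' : ((q':ℝ):ℂ) * (1 - a * (starRingEnd ℂ) a)
        = ((q:ℝ):ℂ)*(1 + a*(starRingEnd ℂ) a) - 2*(starRingEnd ℂ) a*M
          - 2*a*(starRingEnd ℂ) M)
    (hQ : (starRingEnd ℂ) M * b^2 - ((q:ℝ):ℂ)*b + M = 0) :
    (starRingEnd ℂ) M' * (moebAuto lam a b)^2 - ((q':ℝ):ℂ) * (moebAuto lam a b) + M' = 0 := by
  have hM'c := congrArg (starRingEnd ℂ) hM'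
  simp only [map_mul, map_sub, map_add, map_one, map_pow, Complex.conj_conj,
    Complex.conj_ofReal] at hM'c
  have hw : moebAuto lam a b * (1 - (starRingEnd ℂ) a * b) = lam * (b - a) := by
    rw [moebAuto]
    exact div_mul_cancel₀ _ hb
  have expand : ((starRingEnd ℂ) M' * (moebAuto lam a b)^2 - ((q':ℝ):ℂ)*(moebAuto lam a b) + M')
        * ((1 - (starRingEnd ℂ) a * b)^2 * (1 - a * (starRingEnd ℂ) a))
      = ((starRingEnd ℂ) M' * (1 - (starRingEnd ℂ) a * a))
          * (moebAuto lam a b * (1 - (starRingEnd ℂ) a * b))^2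
        - (((q':ℝ):ℂ) * (1 - a * (starRingEnd ℂ) a))
          * (moebAuto lam a b * (1 - (starRingEnd ℂ) a * b)) * (1 - (starRingEnd ℂ) a * b)
        + (M' * (1 - a * (starRingEnd ℂ) a)) * (1 - (starRingEnd ℂ) a * b)^2 := by ring
  have hG3 : ((starRingEnd ℂ) M' * (moebAuto lam a b)^2 - ((q':ℝ):ℂ)*(moebAuto lam a b) + M')
      * ((1 - (starRingEnd ℂ) a * b)^2 * (1 - a * (starRingEnd ℂ) a)) = 0 := by
    rw [expand, hw, hM'c, hq', hM']
    linear_combination (lam * (b-a)^2 * ((starRingEnd ℂ) M - (starRingEnd ℂ) a * ((q:ℝ):ℂ)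
      + ((starRingEnd ℂ) a)^2 * M)) * hlam + (lam * (1 - a*(starRingEnd ℂ) a)^2) * hQ
  rcases mul_eq_zero.mp hG3 with h | h
  · exact h
  · exact absurd h (mul_ne_zero (pow_ne_zero 2 hb) hA)

lemma hbase_lemma (lam a z w : ℂ) (hlamc : lam * (starRingEnd ℂ) lam = 1)
    (ha : ‖a‖ < 1) (hz : ‖z‖ < 1) (hw : w = moebAuto lam a z) :
    ((1 - ‖w‖^2 : ℝ):ℂ) * ((1 - (starRingEnd ℂ) a * z)*(1 - a * (starRingEnd ℂ) z))
      = (1 - a * (starRingEnd ℂ) a) * ((1 - ‖z‖^2 : ℝ):ℂ) := by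
  have hd1 : (1:ℂ) - (starRingEnd ℂ) a * z ≠ 0 := one_sub_mul_ne a z ha hz
  have hd2 : (1:ℂ) - a * (starRingEnd ℂ) z ≠ 0 := by
    intro h
    apply hd1
    have := congrArg (starRingEnd ℂ) h
    simpa [map_sub, map_mul, Complex.conj_conj] using this
  push_cast
  rw [show ((‖w‖:ℝ):ℂ)^2 = w * (starRingEnd ℂ) w from ofReal_normSq' w,
    show ((‖z‖:ℝ):ℂ)^2 = z * (starRingEnd ℂ) z from ofReal_normSq' z, hw, moebAuto]
  simp only [map_div₀, map_mul, map_sub, map_one, Complex.conj_conj]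
  have hd1' : (1:ℂ) - z * (starRingEnd ℂ) a ≠ 0 := by rw [mul_comm]; exact hd1
  field_simp
  linear_combination ((z - a) * ((starRingEnd ℂ) z - (starRingEnd ℂ) a)) * hlamc
    + (2*((starRingEnd ℂ) a * z - (starRingEnd ℂ) a * a - z*(starRingEnd ℂ) z
        + a*(starRingEnd ℂ) z)) * hlamc

/-! ### equivariance -/

set_option maxHeartbeats 1000000 in
lemma equivariance (lam a : ℂ) (hlam : ‖lam‖ = 1) (ha : ‖a‖ < 1)
    (g : UnitDisk → UnitDisk) (hg : ∀ z : UnitDisk, (g z : ℂ) = moebAuto lam a (z : ℂ))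
    (μ ν : P) (hμ : PhiDisk μ < ⊤)
    (hν : (ν : Measure UnitDisk) = (μ : Measure UnitDisk).map g) :
    Bfun ν = moebAuto lam a (Bfun μ) := by
  have hlamc : lam * (starRingEnd ℂ) lam = 1 := by
    rw [RCLike.mul_conj, hlam]
    norm_num
  have hA := one_sub_aa_ne a ha
  have hden : ∀ z : UnitDisk, (1:ℂ) - (starRingEnd ℂ) a * (z:ℂ) ≠ 0 :=
    fun z => one_sub_mul_ne a _ ha (norm_lt z)
  have hgc : Continuous g := by
    rw [Topology.IsEmbedding.subtypeVal.continuous_iff]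
    have he : (Subtype.val ∘ g) = fun z : UnitDisk => moebAuto lam a (z:ℂ) :=
      funext fun z => hg z
    rw [he]
    simp only [moebAuto]
    exact Continuous.div
      (continuous_const.mul (continuous_subtype_val.sub continuous_const))
      (continuous_const.sub (continuous_const.mul continuous_subtype_val)) hden
  have hgm : Measurable g := hgc.measurable
  -- pointwise phi relation
  have hkeyφ : ∀ z : UnitDisk,
      (1 - (starRingEnd ℂ) a * (z:ℂ)) * (1 - a * (starRingEnd ℂ) (z:ℂ)) * ((phi z : ℝ):ℂ)
        = (1 - a * (starRingEnd ℂ) a) * ((phi (g z) : ℝ):ℂ) := by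
    intro z
    have hbase := hbase_lemma lam a (z:ℂ) ((g z : UnitDisk):ℂ) hlamc ha (norm_lt z) (hg z)
    have h1 : ((1 - ‖((g z : UnitDisk):ℂ)‖^2 : ℝ):ℂ) * ((phi (g z):ℝ):ℂ) = 1 := by
      rw [← Complex.ofReal_mul, phi_mul, Complex.ofReal_one]
    have h2 : ((1 - ‖(z:ℂ)‖^2 : ℝ):ℂ) * ((phi z:ℝ):ℂ) = 1 := by
      rw [← Complex.ofReal_mul, phi_mul, Complex.ofReal_one]
    linear_combination (((phi (g z):ℝ):ℂ) * ((phi z:ℝ):ℂ)) * hbase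
      - ((1 - (starRingEnd ℂ) a * (z:ℂ)) * (1 - a*(starRingEnd ℂ) (z:ℂ))
          * ((phi z:ℝ):ℂ)) * h1
      + ((1 - a * (starRingEnd ℂ) a) * ((phi (g z):ℝ):ℂ)) * h2
  have haaC : (1:ℂ) - a * (starRingEnd ℂ) a = ((1 - ‖a‖^2 : ℝ):ℂ) := by
    push_cast
    rw [ofReal_normSq']
  have hD2 : ∀ z : UnitDisk, (1 - a * (starRingEnd ℂ) (z:ℂ))
      = (starRingEnd ℂ) (1 - (starRingEnd ℂ) a * (z:ℂ)) := by
    intro z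
    simp [map_sub, map_mul, Complex.conj_conj]
  have hreal : ∀ z : UnitDisk,
      ‖1 - (starRingEnd ℂ) a * (z:ℂ)‖^2 * phi z = (1 - ‖a‖^2) * phi (g z) := by
    intro z
    have h := congrArg norm (hkeyφ z)
    rw [norm_mul, norm_mul, hD2 z, RCLike.norm_conj, haaC, norm_mul] at h
    simp only [Complex.norm_real, Real.norm_eq_abs] at h
    rw [abs_of_pos (phi_pos z), abs_of_pos (phi_pos (g z)),
      abs_of_pos (by nlinarith [norm_nonneg a] : (0:ℝ) < 1 - ‖a‖^2)] at h
    nlinarith [h]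
  have ha2 : (0:ℝ) < 1 - ‖a‖^2 := by nlinarith [norm_nonneg a]
  have hD1le : ∀ z : UnitDisk, ‖1 - (starRingEnd ℂ) a * (z:ℂ)‖ ≤ 2 := by
    intro z
    calc ‖1 - (starRingEnd ℂ) a * (z:ℂ)‖ ≤ ‖(1:ℂ)‖ + ‖(starRingEnd ℂ) a * (z:ℂ)‖ :=
        norm_sub_le _ _
      _ ≤ 2 := by
        rw [norm_one, norm_mul, RCLike.norm_conj]
        nlinarith [norm_nonneg a, norm_nonneg (z:ℂ), norm_lt z]
  have hφg_int : Integrable (fun z => phi (g z)) (μ : Measure UnitDisk) := by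
    refine integrable_dom _ ((continuous_phi.comp hgc).aestronglyMeasurable)
      (4/(1-‖a‖^2)) (fun z => ?_) hμ
    rw [Real.norm_eq_abs, abs_of_pos (phi_pos (g z)), div_mul_eq_mul_div,
      le_div_iff₀ ha2]
    have h4 : ‖1 - (starRingEnd ℂ) a * (z:ℂ)‖^2 ≤ 4 := by
      nlinarith [hD1le z, norm_nonneg (1 - (starRingEnd ℂ) a * (z:ℂ))]
    nlinarith [hreal z, mul_le_mul_of_nonneg_right h4 (phi_pos z).le]
  have hPhiν : PhiDisk ν < ⊤ := by
    have hl : PhiDisk ν = ∫⁻ z, ENNReal.ofReal (phi (g z)) ∂(μ : Measure UnitDisk) := by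
      have h0 : PhiDisk ν = ∫⁻ z, ENNReal.ofReal (phi z) ∂(ν : Measure UnitDisk) := rfl
      have hmble : Measurable (fun z : UnitDisk => ENNReal.ofReal (phi z)) :=
        ENNReal.measurable_ofReal.comp continuous_phi.measurable
      rw [h0, hν, lintegral_map hmble hgm]
    rw [hl, ← ofReal_integral_eq_lintegral_ofReal hφg_int
      (ae_of_all _ fun z => (phi_pos _).le)]
    exact ENNReal.ofReal_lt_top
  have hcν : cInt ν = ∫ z, phi (g z) ∂(μ : Measure UnitDisk) := by
    rw [cInt, hν, integral_map hgm.aemeasurable continuous_phi.aestronglyMeasurable]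
  have hmν : mInt ν = ∫ z, ((g z : UnitDisk):ℂ) * ((phi (g z) : ℝ):ℂ)
      ∂(μ : Measure UnitDisk) := by
    have hsm : AEStronglyMeasurable (fun z : UnitDisk => (z:ℂ) * ((phi z : ℝ):ℂ))
        ((μ : Measure UnitDisk).map g) :=
      (continuous_subtype_val.mul
        (Complex.continuous_ofReal.comp continuous_phi)).aestronglyMeasurable
    rw [mInt, hν, integral_map hgm.aemeasurable hsm]
  set C : ℂ := ((cInt μ : ℝ):ℂ) with hCdef
  set M : ℂ := mInt μ with hMdef
  have if0 : Integrable (fun z : UnitDisk => ((phi z : ℝ):ℂ)) (μ : Measure UnitDisk) :=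
    (integrable_phi hμ).ofReal
  have if1 : Integrable (fun z : UnitDisk => (z:ℂ) * ((phi z : ℝ):ℂ))
      (μ : Measure UnitDisk) := integrable_zphi hμ
  have if2 : Integrable (fun z : UnitDisk => (starRingEnd ℂ) ((z:ℂ) * ((phi z : ℝ):ℂ)))
      (μ : Measure UnitDisk) := by
    refine integrable_dom _ ?_ 1 (fun z => ?_) hμ
    · exact (Complex.continuous_conj.comp (continuous_subtype_val.mul
        (Complex.continuous_ofReal.comp continuous_phi))).aestronglyMeasurable
    · rw [RCLike.norm_conj, norm_mul, one_mul, Complex.norm_real, Real.norm_eq_abs,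
        abs_of_nonneg (phi_pos z).le]
      nlinarith [norm_lt z, phi_pos z, norm_nonneg (z:ℂ)]
  have if3 : Integrable (fun z : UnitDisk => ((‖(z:ℂ)‖^2 * phi z : ℝ):ℂ))
      (μ : Measure UnitDisk) := by
    refine integrable_dom _ ?_ 1 (fun z => ?_) hμ
    · exact (Complex.continuous_ofReal.comp (((continuous_subtype_val.norm).pow 2).mul
        continuous_phi)).aestronglyMeasurable
    · rw [Complex.norm_real, Real.norm_eq_abs, one_mul,
        abs_of_nonneg (mul_nonneg (sq_nonneg _) (phi_pos z).le)]
      linarith [phi_mul z]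
  have hf0 : ∫ z, ((phi z : ℝ):ℂ) ∂(μ : Measure UnitDisk) = C := by
    rw [hCdef, show ((cInt μ : ℝ):ℂ)
      = ((∫ z, phi z ∂(μ : Measure UnitDisk) : ℝ):ℂ) from rfl]
    exact integral_ofReal
  have hf1 : ∫ z, (z:ℂ) * ((phi z : ℝ):ℂ) ∂(μ : Measure UnitDisk) = M := rfl
  have hf2 : ∫ z, (starRingEnd ℂ) ((z:ℂ) * ((phi z : ℝ):ℂ)) ∂(μ : Measure UnitDisk)
      = (starRingEnd ℂ) M := by
    rw [hMdef, show (mInt μ : ℂ)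
      = ∫ z, (z:ℂ) * ((phi z : ℝ):ℂ) ∂(μ : Measure UnitDisk) from rfl]
    exact integral_conj
  have hf3 : ∫ z, ((‖(z:ℂ)‖^2 * phi z : ℝ):ℂ) ∂(μ : Measure UnitDisk) = C - 1 := by
    have hpt : ∀ z : UnitDisk, ‖(z:ℂ)‖^2 * phi z = phi z - 1 := fun z => by
      linear_combination (-1 : ℝ) * phi_mul z
    have hr : ∫ z, (‖(z:ℂ)‖^2 * phi z) ∂(μ : Measure UnitDisk) = cInt μ - 1 := by
      rw [integral_congr_ae (ae_of_all _ hpt),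
        integral_sub (integrable_phi hμ) (integrable_const 1), integral_const]
      simp [cInt]
    calc ∫ z, ((‖(z:ℂ)‖^2 * phi z : ℝ):ℂ) ∂(μ : Measure UnitDisk)
        = ((∫ z, ‖(z:ℂ)‖^2 * phi z ∂(μ : Measure UnitDisk) : ℝ):ℂ) := integral_ofReal
      _ = C - 1 := by rw [hr]; push_cast; ring
  have hzzpt : ∀ z : UnitDisk, ((‖(z:ℂ)‖^2 * phi z : ℝ):ℂ)
      = (z:ℂ) * (starRingEnd ℂ) (z:ℂ) * ((phi z : ℝ):ℂ) := by
    intro z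
    push_cast
    rw [ofReal_normSq']
  have hconjpt : ∀ z : UnitDisk, (starRingEnd ℂ) ((z:ℂ) * ((phi z : ℝ):ℂ))
      = (starRingEnd ℂ) (z:ℂ) * ((phi z : ℝ):ℂ) := by
    intro z
    rw [map_mul, Complex.conj_ofReal]
  -- first moment identity
  have hc'C : ((cInt ν : ℝ):ℂ) * (1 - a * (starRingEnd ℂ) a)
      = C - (starRingEnd ℂ) a * M - a * (starRingEnd ℂ) M
        + (a * (starRingEnd ℂ) a) * (C - 1) := by
    have hcast1 : ((cInt ν : ℝ):ℂ)
        = ∫ z, ((phi (g z) : ℝ):ℂ) ∂(μ : Measure UnitDisk) := by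
      rw [hcν]; exact integral_ofReal.symm
    have hpt : ∀ z : UnitDisk, ((phi (g z):ℝ):ℂ) * (1 - a * (starRingEnd ℂ) a)
        = ((phi z:ℝ):ℂ) - (starRingEnd ℂ) a * ((z:ℂ) * ((phi z:ℝ):ℂ))
          - a * ((starRingEnd ℂ) ((z:ℂ) * ((phi z:ℝ):ℂ)))
          + (a * (starRingEnd ℂ) a) * ((‖(z:ℂ)‖^2 * phi z : ℝ):ℂ) := by
      intro z
      linear_combination (-1 : ℂ) * hkeyφ z - (a * (starRingEnd ℂ) a) * hzzpt z
        + a * hconjpt z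
    have ifA1 : Integrable (fun z : UnitDisk =>
        ((phi z:ℝ):ℂ) - (starRingEnd ℂ) a * ((z:ℂ) * ((phi z:ℝ):ℂ)))
        (μ : Measure UnitDisk) := if0.sub (if1.const_mul _)
    have ifA : Integrable (fun z : UnitDisk =>
        ((phi z:ℝ):ℂ) - (starRingEnd ℂ) a * ((z:ℂ) * ((phi z:ℝ):ℂ))
          - a * ((starRingEnd ℂ) ((z:ℂ) * ((phi z:ℝ):ℂ))))
        (μ : Measure UnitDisk) := ifA1.sub (if2.const_mul _)
    have ifB : Integrable (fun z : UnitDisk =>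
        (a * (starRingEnd ℂ) a) * ((‖(z:ℂ)‖^2 * phi z : ℝ):ℂ))
        (μ : Measure UnitDisk) := if3.const_mul _
    rw [hcast1, ← integral_mul_const, integral_congr_ae (ae_of_all _ hpt),
      integral_add ifA ifB,
      integral_sub ifA1 (if2.const_mul _),
      integral_sub if0 (if1.const_mul _),
      integral_const_mul, integral_const_mul, integral_const_mul, hf0, hf1, hf2, hf3]
  -- second moment identity
  have hm'C : mInt ν * (1 - a * (starRingEnd ℂ) a)
      = lam * (M - a * (2*C - 1) + a^2 * (starRingEnd ℂ) M) := by
    have hpt : ∀ z : UnitDisk,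
        ((g z : UnitDisk):ℂ) * ((phi (g z) : ℝ):ℂ) * (1 - a * (starRingEnd ℂ) a)
        = lam * ((z:ℂ) * ((phi z:ℝ):ℂ)
            - a * ((‖(z:ℂ)‖^2 * phi z : ℝ):ℂ)
            - a * ((phi z:ℝ):ℂ)
            + a^2 * ((starRingEnd ℂ) ((z:ℂ) * ((phi z:ℝ):ℂ)))) := by
      intro z
      have hgg : ((g z : UnitDisk):ℂ) * (1 - (starRingEnd ℂ) a * (z:ℂ))
          = lam * ((z:ℂ) - a) := by
        rw [hg z, moebAuto]
        exact div_mul_cancel₀ _ (hden z)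
      apply mul_right_cancel₀ (hden z)
      calc ((g z : UnitDisk):ℂ) * ((phi (g z) : ℝ):ℂ) * (1 - a * (starRingEnd ℂ) a)
            * (1 - (starRingEnd ℂ) a * (z:ℂ))
          = lam * ((z:ℂ) - a) * ((1 - a * (starRingEnd ℂ) a) * ((phi (g z):ℝ):ℂ)) := by
            linear_combination (((phi (g z):ℝ):ℂ) * (1 - a * (starRingEnd ℂ) a)) * hgg
        _ = lam * ((z:ℂ) - a) * ((1 - (starRingEnd ℂ) a * (z:ℂ))
              * (1 - a * (starRingEnd ℂ) (z:ℂ)) * ((phi z : ℝ):ℂ)) := by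
            rw [← hkeyφ z]
        _ = lam * ((z:ℂ) * ((phi z:ℝ):ℂ)
              - a * ((‖(z:ℂ)‖^2 * phi z : ℝ):ℂ)
              - a * ((phi z:ℝ):ℂ)
              + a^2 * ((starRingEnd ℂ) ((z:ℂ) * ((phi z:ℝ):ℂ))))
              * (1 - (starRingEnd ℂ) a * (z:ℂ)) := by
            rw [hzzpt z, hconjpt z]
            ring
    calc mInt ν * (1 - a * (starRingEnd ℂ) a)
        = ∫ z, (((g z : UnitDisk):ℂ) * ((phi (g z) : ℝ):ℂ) * (1 - a * (starRingEnd ℂ) a))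
            ∂(μ : Measure UnitDisk) := by
          rw [hmν]
          exact (integral_mul_const _ _).symm
      _ = ∫ z, lam * ((z:ℂ) * ((phi z:ℝ):ℂ)
            - a * ((‖(z:ℂ)‖^2 * phi z : ℝ):ℂ)
            - a * ((phi z:ℝ):ℂ)
            + a^2 * ((starRingEnd ℂ) ((z:ℂ) * ((phi z:ℝ):ℂ))))
            ∂(μ : Measure UnitDisk) := integral_congr_ae (ae_of_all _ hpt)
      _ = lam * (M - a * (2*C - 1) + a^2 * (starRingEnd ℂ) M) := by
          have ifC1 : Integrable (fun z : UnitDisk =>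
              (z:ℂ) * ((phi z:ℝ):ℂ) - a * ((‖(z:ℂ)‖^2 * phi z : ℝ):ℂ))
              (μ : Measure UnitDisk) := if1.sub (if3.const_mul _)
          have ifC : Integrable (fun z : UnitDisk =>
              (z:ℂ) * ((phi z:ℝ):ℂ) - a * ((‖(z:ℂ)‖^2 * phi z : ℝ):ℂ)
                - a * ((phi z:ℝ):ℂ))
              (μ : Measure UnitDisk) := ifC1.sub (if0.const_mul _)
          have ifD : Integrable (fun z : UnitDisk =>
              a^2 * ((starRingEnd ℂ) ((z:ℂ) * ((phi z:ℝ):ℂ))))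
              (μ : Measure UnitDisk) := if2.const_mul _
          rw [integral_const_mul,
            integral_add ifC ifD,
            integral_sub ifC1 (if0.const_mul _),
            integral_sub if1 (if3.const_mul _),
            integral_const_mul, integral_const_mul, integral_const_mul, hf0, hf1, hf2, hf3]
          ring
  -- assemble via uniqueness of the root
  have hqcast : ((qInt μ : ℝ):ℂ) = 2*C - 1 := by
    rw [hCdef, show (qInt μ : ℝ) = 2 * cInt μ - 1 from rfl]
    push_cast
    ring
  have hq'cast : ((qInt ν : ℝ):ℂ) * (1 - a * (starRingEnd ℂ) a)
      = ((qInt μ : ℝ):ℂ) * (1 + a * (starRingEnd ℂ) a)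
        - 2*(starRingEnd ℂ) a * M - 2*a*(starRingEnd ℂ) M := by
    have : ((qInt ν : ℝ):ℂ) = 2*((cInt ν : ℝ):ℂ) - 1 := by
      rw [show (qInt ν : ℝ) = 2 * cInt ν - 1 from rfl]
      push_cast
      ring
    rw [this, hqcast]
    linear_combination 2 * hc'C
  have hM'ka : mInt ν * (1 - a * (starRingEnd ℂ) a)
      = lam * (M - a * ((qInt μ : ℝ):ℂ) + a^2 * (starRingEnd ℂ) M) := by
    rw [hqcast]
    exact hm'C
  have hroot := key_alg lam a (Bfun μ) M (mInt ν) (qInt μ) (qInt ν) hlamc hA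
    (one_sub_mul_ne a (Bfun μ) ha (norm_Bfun_lt hμ)) hM'ka hq'cast (Bfun_root hμ)
  have hq'1 : 1 ≤ qInt ν := by
    have := one_le_cInt hPhiν
    rw [show qInt ν = 2 * cInt ν - 1 from rfl]
    linarith
  exact root_unique (mInt ν) (qInt ν) hq'1
    (moeb_norm_lt lam a (Bfun μ) hlam ha (norm_Bfun_lt hμ))
    (norm_Bfun_lt hPhiν) hroot (Bfun_root hPhiν)

end S17


/-- conformal barycenter.  There is a Borel map `𝔅 : M_∞ → 𝔻`
(for the weak-* topology), equivariant under the holomorphic automorphisms of `𝔻`, with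
`(1−|𝔅(μ)|²)⁻¹ ≤ Φ(μ)`. -/
theorem stmt17 :
    ∃ B : ProbabilityMeasure UnitDisk → ℂ,
      -- Borel measurability for the weak-* topology
      @Measurable _ _ (borel (ProbabilityMeasure UnitDisk)) _ B ∧
      -- equivariance under holomorphic automorphisms of the disk
      (∀ lam a : ℂ, ‖lam‖ = 1 → ‖a‖ < 1 →
        ∀ g : UnitDisk → UnitDisk, (∀ z : UnitDisk, (g z : ℂ) = moebAuto lam a (z : ℂ)) →
        ∀ μ ν : ProbabilityMeasure UnitDisk, PhiDisk μ < ⊤ →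
          (ν : Measure UnitDisk) = (μ : Measure UnitDisk).map g →
          B ν = moebAuto lam a (B μ)) ∧
      -- the barycenter bound `Φ(δ_{𝔅(μ)}) ≤ Φ(μ)` (in particular `𝔅(μ) ∈ 𝔻`)
      (∀ μ : ProbabilityMeasure UnitDisk, PhiDisk μ < ⊤ →
        ‖B μ‖ < 1 ∧ ENNReal.ofReal ((1 - ‖B μ‖ ^ 2)⁻¹) ≤ PhiDisk μ) := by
  refine ⟨S17.Bfun, S17.measurable_Bfun, ?_, ?_⟩
  · intro lam a hlam ha g hg μ ν hμ hν
    exact S17.equivariance lam a hlam ha g hg μ ν hμ hν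
  · intro μ hμ
    refine ⟨S17.norm_Bfun_lt hμ, ?_⟩
    rw [S17.PhiDisk_eq hμ]
    exact ENNReal.ofReal_le_ofReal (S17.Bfun_bound hμ)
end
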